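/- arXiv:2005.05296 — 4 statements merged into one kernel-verified Lean document; each statement's English description precedes it below -/
import Mathlib

section
/- Let α be a finite nonempty type and let G and G' be two closed, block-preserving subgroups of Perm(α × ℕ) whose induced homomorphisms to Perm ℕ are surjective, and which both contain every permutation ℓ_π : (a, i) ↦ (a, π i) for π ∈ Perm ℕ. For X ∈ {G, G'}, let S^X = {g ∈ X | ḡ = id} and, for i ∈ ℕ, let H_i^X = {π ∈ Perm α | ∃ g ∈ S^X, (∀ j < i, ∀ a, g (a, j) = (a, j)) ∧ (∀ a, g (a, i) = (π a, i))}. If H_i^G = H_i^{G'} for every i ∈ ℕ, then G = G'. (Such a closed group is uniquely determined by its tower.) -/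
/-- The `i`-th tower subgroup of a block-preserving group `G ≤ Perm (α × ℕ)`:
the permutations of `α` induced on the block `α × {i}` by elements of the
blockwise stabilizer of `G` fixing the blocks `α × {j}`, `j < i`, pointwise. -/
def towerGroup {α : Type*} (G : Subgroup (Equiv.Perm (α × ℕ))) (i : ℕ) :
    Subgroup (Equiv.Perm α) where
  carrier := {π | ∃ g ∈ G, (∀ (a : α) (j : ℕ), (g (a, j)).2 = j) ∧
    (∀ j < i, ∀ a : α, g (a, j) = (a, j)) ∧ ∀ a : α, g (a, i) = (π a, i)}
  one_mem' := ⟨1, G.one_mem, fun _ _ => rfl, fun _ _ _ => rfl, fun _ => rfl⟩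
  mul_mem' := by
    rintro π π' ⟨g, hg, hsec, hfix, hact⟩ ⟨g', hg', hsec', hfix', hact'⟩
    refine ⟨g * g', G.mul_mem hg hg', fun a j => ?_, fun j hj a => ?_, fun a => ?_⟩
    · have h2 : g' (a, j) = ((g' (a, j)).1, j) := by
        exact Prod.ext rfl (hsec' a j)
      rw [Equiv.Perm.mul_apply, h2]
      exact hsec _ j
    · rw [Equiv.Perm.mul_apply, hfix' j hj a, hfix j hj a]
    · rw [Equiv.Perm.mul_apply, hact' a, hact (π' a)]
      rfl
  inv_mem' := by
    rintro π ⟨g, hg, hsec, hfix, hact⟩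
    have hsec' : ∀ x : α × ℕ, (g x).2 = x.2 := by
      rintro ⟨a, j⟩; exact hsec a j
    refine ⟨g⁻¹, G.inv_mem hg, fun a j => ?_, fun j hj a => ?_, fun a => ?_⟩
    · have := hsec' (g⁻¹ (a, j))
      rw [← Equiv.Perm.mul_apply, mul_inv_cancel, Equiv.Perm.one_apply] at this
      exact this.symm
    · have key : g (a, j) = (a, j) := hfix j hj a
      rw [← key, ← Equiv.Perm.mul_apply, inv_mul_cancel, Equiv.Perm.one_apply, key]
    · have key : g (π⁻¹ a, i) = (a, i) := by rw [hact]; simp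
      rw [← key, ← Equiv.Perm.mul_apply, inv_mul_cancel, Equiv.Perm.one_apply]

theorem Equiv.Perm.apply_inv_self {β : Type*} (f : Equiv.Perm β) (x : β) : f (f⁻¹ x) = x :=
  Equiv.apply_symm_apply f x

theorem Equiv.Perm.inv_apply_self {β : Type*} (f : Equiv.Perm β) (x : β) : f⁻¹ (f x) = x :=
  Equiv.symm_apply_apply f x

section Aux

open Equiv

/-- The permutation of `α × ℕ` acting by `π` on block `j` and trivially elsewhere. -/
private def Eb {α : Type*} (j : ℕ) (π : Equiv.Perm α) : Equiv.Perm (α × ℕ) where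
  toFun x := if x.2 = j then (π x.1, x.2) else x
  invFun x := if x.2 = j then (π⁻¹ x.1, x.2) else x
  left_inv := by rintro ⟨a, i⟩; by_cases h : i = j <;> simp [h]
  right_inv := by rintro ⟨a, i⟩; by_cases h : i = j <;> simp [h]

private theorem Eb_apply {α : Type*} (j : ℕ) (π : Equiv.Perm α) (a : α) (i : ℕ) :
    Eb j π (a, i) = if i = j then (π a, i) else (a, i) := rfl

private theorem Eb_inv {α : Type*} (j : ℕ) (π : Equiv.Perm α) :
    (Eb j π)⁻¹ = Eb j π⁻¹ :=
  Equiv.ext fun _ => rfl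

private theorem Eb_mul {α : Type*} (j : ℕ) (π ρ : Equiv.Perm α) :
    Eb j π * Eb j ρ = Eb j (π * ρ) := by
  apply Equiv.ext
  rintro ⟨a, i⟩
  by_cases h : i = j <;>
    simp [Equiv.Perm.mul_apply, Eb_apply, h]

/-- Conjugating by a ladder permutes the blocks. -/
private theorem conj_ladder {α : Type*} (σ : Equiv.Perm ℕ) {g : Equiv.Perm (α × ℕ)}
    {t : ℕ → Equiv.Perm α} (ht : ∀ (a : α) (k : ℕ), g (a, k) = (t k a, k))
    (a : α) (k : ℕ) :
    (Equiv.prodCongr (Equiv.refl α) σ * g * (Equiv.prodCongr (Equiv.refl α) σ)⁻¹) (a, k)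
      = (t (σ⁻¹ k) a, k) := by
  have h1 : (Equiv.prodCongr (Equiv.refl α) σ)⁻¹ (a, k) = (a, σ⁻¹ k) := rfl
  show (Equiv.prodCongr (Equiv.refl α) σ)
      (g ((Equiv.prodCongr (Equiv.refl α) σ)⁻¹ (a, k))) = _
  rw [h1, ht]
  show (t (σ⁻¹ k) a, σ (σ⁻¹ k)) = _
  rw [Equiv.Perm.apply_inv_self]

/-- Key lemma: a closed ladder-containing group containing a blockwise element with
block actions `t` contains the single-block element `Eb i ((t j)⁻¹ * t i)`. -/
private theorem lem1 {α : Type*} (X : Subgroup (Equiv.Perm (α × ℕ)))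
    (hclX : ∀ σ : Equiv.Perm (α × ℕ),
      (∀ s : Finset (α × ℕ), ∃ g ∈ X, ∀ x ∈ s, g x = σ x) → σ ∈ X)
    (hladX : ∀ π : Equiv.Perm ℕ, Equiv.prodCongr (Equiv.refl α) π ∈ X)
    {g : Equiv.Perm (α × ℕ)} (hg : g ∈ X)
    {t : ℕ → Equiv.Perm α} (ht : ∀ (a : α) (k : ℕ), g (a, k) = (t k a, k))
    {i j : ℕ} (hij : i ≠ j) :
    Eb i ((t j)⁻¹ * t i) ∈ X := by
  set s : Equiv.Perm ℕ := Equiv.swap i j with hs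
  have hsinv : s⁻¹ = s := Equiv.swap_inv i j
  set L : Equiv.Perm (α × ℕ) := Equiv.prodCongr (Equiv.refl α) s with hL
  set c : Equiv.Perm (α × ℕ) := L * g * L⁻¹ with hcdef
  have hcmem : c ∈ X := X.mul_mem (X.mul_mem (hladX s) hg) (X.inv_mem (hladX s))
  have hc : ∀ (a : α) (k : ℕ), c (a, k) = (t (s k) a, k) := by
    intro a k
    have := conj_ladder s ht a k
    rwa [hsinv] at this
  set d : Equiv.Perm (α × ℕ) := c⁻¹ * g with hddef
  have hdmem : d ∈ X := X.mul_mem (X.inv_mem hcmem) hg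
  set u : ℕ → Equiv.Perm α := fun k => (t (s k))⁻¹ * t k with hu
  have huid : ∀ k' : ℕ, s k' = k' → ∀ a : α, u k' a = a := by
    intro k' hk' a
    show ((t (s k'))⁻¹ * t k') a = a
    rw [hk', Equiv.Perm.mul_apply, Equiv.Perm.inv_apply_self]
  have hd : ∀ (a : α) (k : ℕ), d (a, k) = (u k a, k) := by
    intro a k
    apply c.injective
    have h1 : c (d (a, k)) = g (a, k) := by
      show c (c⁻¹ (g (a, k))) = g (a, k)
      exact Equiv.Perm.apply_inv_self c (g (a, k))
    rw [h1, hc, ht]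
    show _ = (t (s k) ((t (s k))⁻¹ (t k a)), k)
    rw [Equiv.Perm.apply_inv_self]
  -- closedness argument
  apply hclX
  intro fs
  set B : ℕ := fs.sup (fun x => x.2) with hB
  set m : ℕ := B + i + j + 1 with hm
  have hmi : m ≠ i := by omega
  have hmj : m ≠ j := by omega
  set w : Equiv.Perm (α × ℕ) :=
    Equiv.prodCongr (Equiv.refl α) (Equiv.swap j m) * d *
      (Equiv.prodCongr (Equiv.refl α) (Equiv.swap j m))⁻¹ with hw
  have hwmem : w ∈ X :=
    X.mul_mem (X.mul_mem (hladX _) hdmem) (X.inv_mem (hladX _))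
  have hwap : ∀ (a : α) (k : ℕ), w (a, k) = (u (Equiv.swap j m k) a, k) := by
    intro a k
    have := conj_ladder (Equiv.swap j m) hd a k
    rwa [Equiv.swap_inv] at this
  refine ⟨w, hwmem, ?_⟩
  rintro ⟨a, k⟩ hk
  have hkB : k ≤ B := Finset.le_sup (f := fun x : α × ℕ => x.2) hk
  have hkm : k ≠ m := by omega
  rw [hwap, Eb_apply]
  by_cases hki : k = i
  · subst hki
    rw [if_pos rfl, Equiv.swap_apply_of_ne_of_ne hij (fun h => hmi h.symm)]
    have hui : u k = (t j)⁻¹ * t k := by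
      rw [hu]
      simp only []
      rw [hs, Equiv.swap_apply_left]
    rw [hui]
  · rw [if_neg hki]
    by_cases hkj : k = j
    · subst hkj
      rw [Equiv.swap_apply_left,
        huid m (Equiv.swap_apply_of_ne_of_ne hmi hmj)]
    · rw [Equiv.swap_apply_of_ne_of_ne hkj hkm,
        huid k (Equiv.swap_apply_of_ne_of_ne hki hkj)]

private theorem mem_tower_of_Eb {α : Type*} {X : Subgroup (Equiv.Perm (α × ℕ))}
    {j : ℕ} {π : Equiv.Perm α} (h : Eb j π ∈ X) : π ∈ towerGroup X j := by
  refine ⟨Eb j π, h, ?_, ?_, ?_⟩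
  · intro a k
    rw [Eb_apply]
    by_cases hkj : k = j <;> simp [hkj]
  · intro k hk a
    rw [Eb_apply, if_neg (Nat.ne_of_lt hk)]
  · intro a
    rw [Eb_apply, if_pos rfl]

/-- Inverse of a block-preserving permutation is block-preserving. -/
private theorem inv_sec {α : Type*} {g : Equiv.Perm (α × ℕ)}
    (hg : ∀ (a : α) (k : ℕ), (g (a, k)).2 = k) (a : α) (k : ℕ) :
    (g⁻¹ (a, k)).2 = k := by
  have hg' : ∀ x : α × ℕ, (g x).2 = x.2 := fun x => hg x.1 x.2
  have := hg' (g⁻¹ (a, k))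
  rw [Equiv.Perm.apply_inv_self] at this
  exact this.symm

/-- The block action of a blockwise permutation on a block, as a permutation. -/
private def blockPerm {α : Type*} (g : Equiv.Perm (α × ℕ))
    (hg : ∀ (a : α) (k : ℕ), (g (a, k)).2 = k) (k : ℕ) : Equiv.Perm α where
  toFun a := (g (a, k)).1
  invFun a := (g⁻¹ (a, k)).1
  left_inv a := by
    have h1 : g (a, k) = ((g (a, k)).1, k) := Prod.ext rfl (hg a k)
    show (g⁻¹ ((g (a, k)).1, k)).1 = a
    rw [← h1, Equiv.Perm.inv_apply_self]
  right_inv a := by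
    have h2 : g⁻¹ (a, k) = ((g⁻¹ (a, k)).1, k) := Prod.ext rfl (inv_sec hg a k)
    show (g ((g⁻¹ (a, k)).1, k)).1 = a
    rw [← h2, Equiv.Perm.apply_inv_self]

private theorem blockPerm_spec {α : Type*} (g : Equiv.Perm (α × ℕ))
    (hg : ∀ (a : α) (k : ℕ), (g (a, k)).2 = k) (k : ℕ) (a : α) :
    g (a, k) = (blockPerm g hg k a, k) :=
  Prod.ext rfl (hg a k)

/-- Transfer lemma: for `j ≠ 0`, membership in the `j`-th tower group gives
membership of the single-block element. -/
private theorem lem2 {α : Type*} (X : Subgroup (Equiv.Perm (α × ℕ)))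
    (hclX : ∀ σ : Equiv.Perm (α × ℕ),
      (∀ s : Finset (α × ℕ), ∃ g ∈ X, ∀ x ∈ s, g x = σ x) → σ ∈ X)
    (hladX : ∀ π : Equiv.Perm ℕ, Equiv.prodCongr (Equiv.refl α) π ∈ X)
    {j : ℕ} (hj : j ≠ 0) {π : Equiv.Perm α}
    (hπ : π ∈ towerGroup X j) : Eb j π ∈ X := by
  obtain ⟨g, hg, hsec, hfix, hact⟩ := hπ
  set t : ℕ → Equiv.Perm α := fun k => blockPerm g hsec k with htdef
  have ht : ∀ (a : α) (k : ℕ), g (a, k) = (t k a, k) := fun a k => blockPerm_spec g hsec k a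
  have key : ∀ M : ℕ, ∃ h ∈ X, ∃ u : ℕ → Equiv.Perm α,
      (∀ (a : α) (k : ℕ), h (a, k) = (u k a, k)) ∧
      (∀ (a : α) (k : ℕ), k ≤ j + M → h (a, k) = Eb j π (a, k)) := by
    intro M
    induction M with
    | zero =>
      refine ⟨g, hg, t, ht, ?_⟩
      intro a k hk
      rw [Eb_apply]
      by_cases hkj : k = j
      · subst hkj; rw [if_pos rfl]; exact hact a
      · rw [if_neg hkj]
        exact hfix k (by omega) a
    | succ M ih =>
      obtain ⟨h, hh, u, hu, hag⟩ := ih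
      have hu0 : u 0 = 1 := by
        apply Equiv.ext
        intro a
        have h0 := hag a 0 (Nat.zero_le _)
        rw [hu, Eb_apply, if_neg (fun hh' => hj hh'.symm)] at h0
        simpa using congrArg Prod.fst h0
      set m : ℕ := j + M + 1 with hm
      have hm0 : m ≠ 0 := by omega
      have hmem : Eb m (u m) ∈ X := by
        have h1 := lem1 X hclX hladX hh hu (i := m) (j := 0) hm0
        rwa [hu0, inv_one, one_mul] at h1
      refine ⟨h * (Eb m (u m))⁻¹, X.mul_mem hh (X.inv_mem hmem),
        fun k => if k = m then 1 else u k, ?_, ?_⟩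
      · intro a k
        show h ((Eb m (u m))⁻¹ (a, k)) = ((if k = m then 1 else u k) a, k)
        rw [Eb_inv, Eb_apply]
        by_cases hkm : k = m
        · rw [if_pos hkm, if_pos hkm, hu, hkm, Equiv.Perm.apply_inv_self]
          rfl
        · rw [if_neg hkm, if_neg hkm, hu]
      · intro a k hk
        show h ((Eb m (u m))⁻¹ (a, k)) = Eb j π (a, k)
        rw [Eb_inv, Eb_apply]
        by_cases hkm : k = m
        · rw [if_pos hkm, hu, hkm, Equiv.Perm.apply_inv_self, Eb_apply,
            if_neg (show m ≠ j by omega)]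
        · rw [if_neg hkm]
          exact hag a k (by omega)
  apply hclX
  intro fs
  obtain ⟨h, hh, u, hu, hag⟩ := key (fs.sup (fun x => x.2))
  refine ⟨h, hh, ?_⟩
  rintro ⟨a, k⟩ hk
  exact hag a k (by
    have : k ≤ fs.sup (fun x : α × ℕ => x.2) := Finset.le_sup (f := fun x : α × ℕ => x.2) hk
    omega)

/-- One-sided inclusion. -/
private theorem main_le {α : Type*} (G G' : Subgroup (Equiv.Perm (α × ℕ)))
    (hbp : ∀ g ∈ G, ∃ σ : Equiv.Perm ℕ, ∀ (a : α) (i : ℕ), (g (a, i)).2 = σ i)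
    (hclosed : ∀ σ : Equiv.Perm (α × ℕ),
      (∀ s : Finset (α × ℕ), ∃ g ∈ G, ∀ x ∈ s, g x = σ x) → σ ∈ G)
    (hclosed' : ∀ σ : Equiv.Perm (α × ℕ),
      (∀ s : Finset (α × ℕ), ∃ g ∈ G', ∀ x ∈ s, g x = σ x) → σ ∈ G')
    (hlad : ∀ π : Equiv.Perm ℕ, Equiv.prodCongr (Equiv.refl α) π ∈ G)
    (hlad' : ∀ π : Equiv.Perm ℕ, Equiv.prodCongr (Equiv.refl α) π ∈ G')
    (htower : ∀ i : ℕ, towerGroup G i = towerGroup G' i) :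
    G ≤ G' := by
  intro g hgG
  obtain ⟨σ, hσ⟩ := hbp g hgG
  set L : Equiv.Perm (α × ℕ) := Equiv.prodCongr (Equiv.refl α) σ with hLdef
  set g₀ : Equiv.Perm (α × ℕ) := L⁻¹ * g with hg₀def
  have hg0 : g₀ ∈ G := G.mul_mem (G.inv_mem (hlad σ)) hgG
  have hsec : ∀ (a : α) (k : ℕ), (g₀ (a, k)).2 = k := by
    intro a k
    show ((L⁻¹) (g (a, k))).2 = k
    have h1 : (L⁻¹) (g (a, k)) = ((g (a, k)).1, σ⁻¹ ((g (a, k)).2)) := rfl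
    rw [h1]
    show σ⁻¹ ((g (a, k)).2) = k
    rw [hσ a k, Equiv.Perm.inv_apply_self]
  set t : ℕ → Equiv.Perm α := fun k => blockPerm g₀ hsec k with htdef
  have ht : ∀ (a : α) (k : ℕ), g₀ (a, k) = (t k a, k) := fun a k => blockPerm_spec g₀ hsec k a
  have ht0 : t 0 ∈ towerGroup G' 0 := by
    rw [← htower 0]
    exact ⟨g₀, hg0, hsec, fun j hj a => absurd hj (Nat.not_lt_zero j), fun a => ht a 0⟩
  obtain ⟨s, hs, hssec, _, hsact⟩ := ht0
  set v : ℕ → Equiv.Perm α := fun k => blockPerm s hssec k with hvdef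
  have hv : ∀ (a : α) (k : ℕ), s (a, k) = (v k a, k) := fun a k => blockPerm_spec s hssec k a
  have key : ∀ M : ℕ, ∃ h ∈ G', ∃ u : ℕ → Equiv.Perm α,
      (∀ (a : α) (k : ℕ), h (a, k) = (u k a, k)) ∧
      (∀ (a : α) (k : ℕ), k ≤ M → h (a, k) = g₀ (a, k)) := by
    intro M
    induction M with
    | zero =>
      refine ⟨s, hs, v, hv, ?_⟩
      intro a k hk
      interval_cases k
      rw [hsact a, ht]
    | succ M ih =>
      obtain ⟨h, hh, u, hu, hag⟩ := ih
      set m : ℕ := M + 1 with hm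
      have hm0 : m ≠ 0 := by omega
      have hu0 : ∀ a : α, u 0 a = t 0 a := by
        intro a
        have h0 := hag a 0 (Nat.zero_le _)
        rw [hu, ht] at h0
        exact congrArg Prod.fst h0
      set w : Equiv.Perm α := ((u m)⁻¹ * u 0) * ((t 0)⁻¹ * t m) with hwdef
      have e1 : Eb m ((u 0)⁻¹ * u m) ∈ G' := lem1 G' hclosed' hlad' hh hu (i := m) (j := 0) hm0
      have e1' : Eb m ((u m)⁻¹ * u 0) ∈ G' := by
        have := G'.inv_mem e1
        rwa [Eb_inv, mul_inv_rev, inv_inv] at this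
      have e2 : Eb m ((t 0)⁻¹ * t m) ∈ G := lem1 G hclosed hlad hg0 ht (i := m) (j := 0) hm0
      have e2' : Eb m ((t 0)⁻¹ * t m) ∈ G' := by
        apply lem2 G' hclosed' hlad' hm0
        rw [← htower m]
        exact mem_tower_of_Eb e2
      have hvmem : Eb m w ∈ G' := by
        have := G'.mul_mem e1' e2'
        rwa [Eb_mul] at this
      refine ⟨h * Eb m w, G'.mul_mem hh hvmem,
        fun k => if k = m then u m * w else u k, ?_, ?_⟩
      · intro a k
        show h (Eb m w (a, k)) = ((if k = m then u m * w else u k) a, k)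
        rw [Eb_apply]
        by_cases hkm : k = m
        · rw [if_pos hkm, if_pos hkm, hu, hkm]
          rfl
        · rw [if_neg hkm, if_neg hkm, hu]
      · intro a k hk
        show h (Eb m w (a, k)) = g₀ (a, k)
        rw [Eb_apply]
        by_cases hkm : k = m
        · rw [if_pos hkm, hu, ht, hkm]
          congr 1
          show (u m) (w a) = t m a
          show (u m) (((u m)⁻¹ * u 0) (((t 0)⁻¹ * t m) a)) = t m a
          rw [Equiv.Perm.mul_apply, Equiv.Perm.mul_apply, Equiv.Perm.apply_inv_self,
            hu0, Equiv.Perm.apply_inv_self]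
        · rw [if_neg hkm]
          exact hag a k (by omega)
  have hg₀mem : g₀ ∈ G' := by
    apply hclosed'
    intro fs
    obtain ⟨h, hh, u, hu, hag⟩ := key (fs.sup (fun x => x.2))
    refine ⟨h, hh, ?_⟩
    rintro ⟨a, k⟩ hk
    exact hag a k (Finset.le_sup (f := fun x : α × ℕ => x.2) hk)
  have : g = L * g₀ := by rw [hg₀def, mul_inv_cancel_left]
  rw [this]
  exact G'.mul_mem (hlad' σ) hg₀mem

end Aux

/-- A closed block-preserving subgroup of `Perm (α × ℕ)` inducing the full
symmetric group on the blocks and containing all the "ladder" permutations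
`(a, i) ↦ (a, π i)` is uniquely determined by its tower. -/
theorem closed_group_determined_by_tower
    (α : Type*) [Finite α] [Nonempty α]
    (G G' : Subgroup (Equiv.Perm (α × ℕ)))
    (hbp : ∀ g ∈ G, ∃ σ : Equiv.Perm ℕ, ∀ (a : α) (i : ℕ), (g (a, i)).2 = σ i)
    (hbp' : ∀ g ∈ G', ∃ σ : Equiv.Perm ℕ, ∀ (a : α) (i : ℕ), (g (a, i)).2 = σ i)
    (hsurj : ∀ τ : Equiv.Perm ℕ, ∃ g ∈ G, ∀ (a : α) (i : ℕ), (g (a, i)).2 = τ i)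
    (hsurj' : ∀ τ : Equiv.Perm ℕ, ∃ g ∈ G', ∀ (a : α) (i : ℕ), (g (a, i)).2 = τ i)
    (hclosed : ∀ σ : Equiv.Perm (α × ℕ),
      (∀ s : Finset (α × ℕ), ∃ g ∈ G, ∀ x ∈ s, g x = σ x) → σ ∈ G)
    (hclosed' : ∀ σ : Equiv.Perm (α × ℕ),
      (∀ s : Finset (α × ℕ), ∃ g ∈ G', ∀ x ∈ s, g x = σ x) → σ ∈ G')
    (hlad : ∀ π : Equiv.Perm ℕ, Equiv.prodCongr (Equiv.refl α) π ∈ G)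
    (hlad' : ∀ π : Equiv.Perm ℕ, Equiv.prodCongr (Equiv.refl α) π ∈ G')
    (htower : ∀ i : ℕ, towerGroup G i = towerGroup G' i) :
    G = G' :=
  le_antisymm (main_le G G' hbp hclosed hclosed' hlad hlad' htower)
    (main_le G' G hbp' hclosed' hclosed hlad' hlad (fun i => (htower i).symm))
end

section
/- Let k be a natural number and let G = {g ∈ Perm(ℕ × Fin k) | ∃ σ ∈ Perm (Fin k), ∃ f : Fin k → Perm ℕ, ∀ a i, g (a, i) = (f i a, σ i)} be the wreath product Sym(ℕ) ≀ Sym(k) acting on k infinite blocks ℕ × {i}. Then for every natural number n, the number of G-orbits of n-element finite subsets of ℕ × Fin k equals the number of integer partitions of n with at most k parts. -/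
/-- The orbit setoid of a permutation group on `n`-element finite subsets. -/
def permSetoid {E : Type*} (G : Subgroup (Equiv.Perm E)) (n : ℕ) :
    Setoid {s : Set E // s.Finite ∧ s.ncard = n} where
  r s t := ∃ g ∈ G, g '' s.1 = t.1
  iseqv := by
    constructor
    · exact fun s => ⟨1, G.one_mem, by simp⟩
    · rintro s t ⟨g, hg, h⟩
      refine ⟨g⁻¹, G.inv_mem hg, ?_⟩
      rw [← h, ← Set.image_comp]
      ext x; simp
    · rintro s t u ⟨g, hg, h⟩ ⟨g', hg', h'⟩
      refine ⟨g' * g, G.mul_mem hg' hg, ?_⟩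
      rw [← h', ← h, ← Set.image_comp]
      ext x; simp

/-- The profile of a permutation group. -/
noncomputable def profile {E : Type*} (G : Subgroup (Equiv.Perm E)) (n : ℕ) : ℕ :=
  Nat.card (Quotient (permSetoid G n))

/-- The wreath product `H ≀ P` of `H ≤ Perm α` and `P ≤ Perm I`, realized as a
subgroup of `Perm (α × I)`. -/
def wreath {α I : Type*} (H : Subgroup (Equiv.Perm α)) (P : Subgroup (Equiv.Perm I)) :
    Subgroup (Equiv.Perm (α × I)) where
  carrier := {g | ∃ σ ∈ P, ∃ h : I → Equiv.Perm α, (∀ i, h i ∈ H) ∧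
    ∀ (a : α) (i : I), g (a, i) = (h i a, σ i)}
  one_mem' := ⟨1, P.one_mem, fun _ => 1, fun _ => H.one_mem, fun _ _ => rfl⟩
  mul_mem' := by
    rintro g g' ⟨σ, hσ, h, hh, hg⟩ ⟨σ', hσ', h', hh', hg'⟩
    refine ⟨σ * σ', P.mul_mem hσ hσ', fun i => h (σ' i) * h' i,
      fun i => H.mul_mem (hh _) (hh' _), fun a i => ?_⟩
    simp [Equiv.Perm.mul_apply, hg', hg]
  inv_mem' := by
    rintro g ⟨σ, hσ, h, hh, hg⟩
    refine ⟨σ⁻¹, P.inv_mem hσ, fun i => (h (σ⁻¹ i))⁻¹,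
      fun i => H.inv_mem (hh _), fun a i => ?_⟩
    have key : g ((h (σ⁻¹ i))⁻¹ a, σ⁻¹ i) = (a, i) := by rw [hg]; simp
    rw [← key]; simp

/-! ### Auxiliary material -/

section Aux

variable {k : ℕ}

/-- The fiber of a subset of `ℕ × Fin k` over the block `i`. -/
def fib (s : Set (ℕ × Fin k)) (i : Fin k) : Set ℕ := {a | (a, i) ∈ s}

lemma fib_finite {s : Set (ℕ × Fin k)} (hs : s.Finite) (i : Fin k) : (fib s i).Finite := by
  have : fib s i = (fun a => (a, i)) ⁻¹' s := rfl
  rw [this]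
  exact Set.Finite.preimage (fun a _ b _ h => congrArg Prod.fst h) hs

lemma ncard_eq_sum_fib {s : Set (ℕ × Fin k)} (hs : s.Finite) :
    s.ncard = ∑ i, (fib s i).ncard := by
  have e : ↥s ≃ Σ i : Fin k, ↥(fib s i) :=
    { toFun := fun x => ⟨x.1.2, x.1.1, x.2⟩
      invFun := fun x => ⟨(x.2.1, x.1), x.2.2⟩
      left_inv := fun x => rfl
      right_inv := fun x => rfl }
  haveI : ∀ i, Fintype (fib s i) := fun i => (fib_finite hs i).fintype
  rw [← Nat.card_coe_set_eq, Nat.card_congr e, Nat.card_eq_fintype_card,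
    Fintype.card_sigma]
  congr 1
  funext i
  rw [← Nat.card_coe_set_eq, Nat.card_eq_fintype_card]

/-- The multiset of fiber sizes. -/
noncomputable def sizesM (s : Set (ℕ × Fin k)) : Multiset ℕ :=
  Finset.univ.val.map fun i => (fib s i).ncard

lemma univ_val_map {β : Type*} (f : Fin k → β) :
    (Finset.univ.val.map f : Multiset β) = ↑(List.ofFn f) := by
  rw [Fin.univ_def, List.ofFn_eq_map]
  rfl

lemma sizesM_card (s : Set (ℕ × Fin k)) : (sizesM s).card = k := by
  rw [sizesM, Multiset.card_map, ← Finset.card_def, Finset.card_univ, Fintype.card_fin]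

lemma sizesM_sum {s : Set (ℕ × Fin k)} (hs : s.Finite) : (sizesM s).sum = s.ncard := by
  rw [ncard_eq_sum_fib hs, sizesM, Finset.sum]

lemma fib_image {g : Equiv.Perm (ℕ × Fin k)} {σ : Equiv.Perm (Fin k)}
    {f : Fin k → Equiv.Perm ℕ} (hg : ∀ a i, g (a, i) = (f i a, σ i))
    (s : Set (ℕ × Fin k)) (i : Fin k) :
    fib (g '' s) (σ i) = f i '' fib s i := by
  ext b
  constructor
  · rintro ⟨⟨a, j⟩, hx, hgx⟩
    rw [hg] at hgx
    obtain ⟨h1, h2⟩ := Prod.mk.injEq .. ▸ hgx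
    have : j = i := σ.injective h2
    subst this
    exact ⟨a, hx, h1⟩
  · rintro ⟨a, ha, rfl⟩
    exact ⟨(a, i), ha, hg a i⟩

lemma sizesM_image {g : Equiv.Perm (ℕ × Fin k)} {σ : Equiv.Perm (Fin k)}
    {f : Fin k → Equiv.Perm ℕ} (hg : ∀ a i, g (a, i) = (f i a, σ i))
    (s : Set (ℕ × Fin k)) : sizesM (g '' s) = sizesM s := by
  unfold sizesM
  have h1 : (Finset.univ.val : Multiset (Fin k)) = Finset.univ.val.map σ := by
    conv_lhs => rw [← Finset.map_univ_equiv σ]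
    rfl
  conv_lhs => rw [h1, Multiset.map_map]
  apply Multiset.map_congr rfl
  intro i _
  simp only [Function.comp_apply, fib_image hg s i,
    Set.ncard_image_of_injective _ (f i).injective]

lemma exists_comp_eq_of_map_univ_eq {α β : Type*} [Fintype α] [DecidableEq α] [DecidableEq β]
    {f g : α → β} (h : Finset.univ.val.map f = Finset.univ.val.map g) :
    ∃ σ : Equiv.Perm α, ∀ a, g (σ a) = f a := by
  have hcard : ∀ b, Fintype.card {a // f a = b} = Fintype.card {a // g a = b} := by
    intro b
    have hf := Multiset.count_map (f := f) (s := Finset.univ.val) (b := b)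
    have hg := Multiset.count_map (f := g) (s := Finset.univ.val) (b := b)
    have e1 : ∀ (u : α → β), Multiset.filter (fun x => u x = b) Finset.univ.val
        = Multiset.filter (fun a => b = u a) Finset.univ.val := by
      intro u; simp [eq_comm]
    simp only [Fintype.card_subtype, Finset.card_def, Finset.filter_val, e1, ← hf, ← hg, h]
  have e : ∀ b, {a // f a = b} ≃ {a // g a = b} := fun b => Fintype.equivOfCardEq (hcard b)
  exact ⟨Equiv.ofFiberEquiv e, fun a => Equiv.ofFiberEquiv_map e a⟩

/-- Finite subsets of `ℕ` of equal size are related by a permutation of `ℕ`. -/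
lemma exists_perm_image_of_ncard_eq {A B : Set ℕ} (hA : A.Finite) (hB : B.Finite)
    (h : A.ncard = B.ncard) : ∃ π : Equiv.Perm ℕ, π '' A = B := by
  classical
  haveI := hA.fintype
  haveI := hB.fintype
  have hc : Fintype.card A = Fintype.card B := by
    rw [← Nat.card_eq_fintype_card, ← Nat.card_eq_fintype_card,
      Nat.card_coe_set_eq, Nat.card_coe_set_eq, h]
  have eAB : ↥A ≃ ↥B := Fintype.equivOfCardEq hc
  haveI : Infinite ↥(Aᶜ) := (hA.infinite_compl).to_subtype
  haveI : Infinite ↥(Bᶜ) := (hB.infinite_compl).to_subtype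
  obtain ⟨dA⟩ := nonempty_denumerable ↥(Aᶜ)
  obtain ⟨dB⟩ := nonempty_denumerable ↥(Bᶜ)
  have eC : ↥(Aᶜ) ≃ ↥(Bᶜ) := (@Denumerable.eqv _ dA).trans (@Denumerable.eqv _ dB).symm
  refine ⟨(Equiv.Set.sumCompl A).symm.trans ((eAB.sumCongr eC).trans (Equiv.Set.sumCompl B)), ?_⟩
  ext b
  simp only [Set.mem_image, Equiv.trans_apply]
  constructor
  · rintro ⟨a, ha, rfl⟩
    rw [Equiv.Set.sumCompl_symm_apply_of_mem ha]
    simp only [Equiv.sumCongr_apply, Sum.map_inl, Equiv.Set.sumCompl_apply_inl]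
    exact (eAB ⟨a, ha⟩).2
  · intro hb
    refine ⟨(eAB.symm ⟨b, hb⟩ : ℕ), (eAB.symm ⟨b, hb⟩).2, ?_⟩
    rw [Equiv.Set.sumCompl_symm_apply_of_mem (eAB.symm ⟨b, hb⟩).2]
    simp

/-- The partition of `n` attached to an `n`-element subset of `ℕ × Fin k`:
the multiset of nonzero fiber sizes. -/
noncomputable def toPart {n : ℕ} (s : {s : Set (ℕ × Fin k) // s.Finite ∧ s.ncard = n}) :
    {p : Nat.Partition n // p.parts.card ≤ k} :=
  ⟨{ parts := (sizesM s.1).filter (fun x => 0 < x)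
     parts_pos := fun h => (Multiset.mem_filter.mp h).2
     parts_sum := by
        have h2 := congrArg Multiset.sum
          (Multiset.filter_add_not (fun x => 0 < x) (sizesM s.1))
        rw [Multiset.sum_add] at h2
        have h3 : ((sizesM s.1).filter (fun x => ¬ 0 < x)).sum = 0 :=
          Multiset.sum_eq_zero (fun x hx => by
            have := (Multiset.mem_filter.mp hx).2; omega)
        rw [h3, add_zero, sizesM_sum s.2.1, s.2.2] at h2
        exact h2 },
   le_trans (Multiset.card_le_card (Multiset.filter_le _ _)) (sizesM_card s.1).le⟩

lemma toPart_eq_fullEq {n : ℕ} {s t : {s : Set (ℕ × Fin k) // s.Finite ∧ s.ncard = n}}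
    (h : toPart s = toPart t) : sizesM s.1 = sizesM t.1 := by
  have hfil : (sizesM s.1).filter (fun x => 0 < x) = (sizesM t.1).filter (fun x => 0 < x) :=
    congrArg (fun p => p.1.parts) h
  have key : ∀ u : Set (ℕ × Fin k),
      sizesM u = (sizesM u).filter (fun x => 0 < x)
        + Multiset.replicate (k - ((sizesM u).filter (fun x => 0 < x)).card) 0 := by
    intro u
    conv_lhs => rw [← Multiset.filter_add_not (fun x => 0 < x) (sizesM u)]
    congr 1
    rw [Multiset.eq_replicate]
    constructor
    · have := congrArg Multiset.card
        (Multiset.filter_add_not (fun x => 0 < x) (sizesM u))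
      rw [Multiset.card_add, sizesM_card] at this
      omega
    · intro b hb
      have := (Multiset.mem_filter.mp hb).2; omega
  rw [key s.1, key t.1, hfil]

/-- Two subsets with the same attached partition lie in the same orbit. -/
lemma orbit_of_toPart_eq {n : ℕ} {s t : {s : Set (ℕ × Fin k) // s.Finite ∧ s.ncard = n}}
    (h : toPart s = toPart t) :
    ∃ g ∈ wreath (⊤ : Subgroup (Equiv.Perm ℕ)) (⊤ : Subgroup (Equiv.Perm (Fin k))),
      g '' s.1 = t.1 := by
  classical
  have hfull : sizesM s.1 = sizesM t.1 := toPart_eq_fullEq h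
  obtain ⟨σ, hσ⟩ := exists_comp_eq_of_map_univ_eq
    (f := fun i => (fib s.1 i).ncard) (g := fun i => (fib t.1 i).ncard) hfull
  choose π hπ using fun i => exists_perm_image_of_ncard_eq
    (fib_finite s.2.1 i) (fib_finite t.2.1 (σ i)) (hσ i).symm
  refine ⟨(Equiv.prodComm ℕ (Fin k)).trans
      ((Equiv.prodShear σ π).trans (Equiv.prodComm (Fin k) ℕ)),
    ⟨σ, trivial, π, fun _ => trivial, fun a i => rfl⟩, ?_⟩
  ext ⟨b, j⟩
  constructor
  · rintro ⟨⟨a, i⟩, hx, heq⟩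
    rw [← heq]
    show (π i a, σ i) ∈ t.1
    have : π i a ∈ fib t.1 (σ i) := (hπ i) ▸ ⟨a, hx, rfl⟩
    exact this
  · intro hbj
    have hb : b ∈ fib t.1 (σ (σ.symm j)) := by
      rw [σ.apply_symm_apply]; exact hbj
    rw [← hπ (σ.symm j)] at hb
    obtain ⟨a, ha, rfl⟩ := hb
    refine ⟨(a, σ.symm j), ha, ?_⟩
    show (π (σ.symm j) a, σ (σ.symm j)) = (π (σ.symm j) a, j)
    rw [σ.apply_symm_apply]

lemma ofFn_get_cast {β : Type*} {m : ℕ} (l : List β) (h : l.length = m) :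
    List.ofFn (fun i : Fin m => l.get (Fin.cast h.symm i)) = l := by
  subst h
  exact List.ofFn_get l

/-- Every partition of `n` with at most `k` parts is attached to some subset. -/
lemma toPart_surjective {n : ℕ} (p : Nat.Partition n) (hp : p.parts.card ≤ k) :
    ∃ s : {s : Set (ℕ × Fin k) // s.Finite ∧ s.ncard = n}, toPart s = ⟨p, hp⟩ := by
  classical
  set l : List ℕ := p.parts.toList ++ List.replicate (k - p.parts.card) 0 with hl
  have hlen : l.length = k := by
    simp only [hl, List.length_append, List.length_replicate, Multiset.length_toList]
    omega
  set sizes : Fin k → ℕ := fun i => l.get (Fin.cast hlen.symm i) with hsizes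
  have hofn : List.ofFn sizes = l := ofFn_get_cast l hlen
  set s : Set (ℕ × Fin k) := {x | x.1 < sizes x.2} with hs
  have hfib : ∀ i, fib s i = Set.Iio (sizes i) := fun i => rfl
  have hfibn : ∀ i, (fib s i).ncard = sizes i := by
    intro i
    rw [hfib i, ← Finset.coe_range, Set.ncard_coe_finset, Finset.card_range]
  have hfin : s.Finite := by
    have hcov : s = ⋃ i, (fun a => (a, i)) '' fib s i := by
      ext ⟨a, i⟩
      simp only [Set.mem_iUnion, Set.mem_image]
      constructor
      · intro h; exact ⟨i, a, h, rfl⟩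
      · rintro ⟨j, b, hb, heq⟩
        obtain ⟨h1, h2⟩ := Prod.mk.injEq .. ▸ heq
        subst h1; subst h2; exact hb
    rw [hcov]
    exact Set.finite_iUnion fun i => ((hfib i ▸ Set.finite_Iio _).image _)
  have hsizesM : sizesM s = (l : Multiset ℕ) := by
    rw [sizesM]
    have : (fun i => (fib s i).ncard) = sizes := funext hfibn
    rw [this, univ_val_map, hofn]
  have hn : s.ncard = n := by
    rw [← sizesM_sum hfin, hsizesM]
    simp only [hl, ← Multiset.coe_add]
    rw [Multiset.sum_add, Multiset.coe_toList, Multiset.coe_replicate,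
      Multiset.sum_replicate, smul_zero, add_zero, p.parts_sum]
  refine ⟨⟨s, hfin, hn⟩, ?_⟩
  apply Subtype.ext
  apply Nat.Partition.ext
  show (sizesM s).filter (fun x => 0 < x) = p.parts
  rw [hsizesM, hl, ← Multiset.coe_add, Multiset.filter_add, Multiset.coe_toList,
    Multiset.coe_replicate]
  rw [Multiset.filter_eq_self.mpr (fun a ha => p.parts_pos ha),
    Multiset.filter_eq_nil.mpr (fun a ha => by
      rw [Multiset.eq_of_mem_replicate ha]; omega), add_zero]

end Aux

/-- For the wreath product `G = Sym(ℕ) ≀ Sym(k)` acting on `k` infinite blocks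
`ℕ × {i}`, the number of `G`-orbits of `n`-element subsets of `ℕ × Fin k`
equals the number of integer partitions of `n` with at most `k` parts. -/
theorem profile_symInfty_wreath_symk (k : ℕ) :
    ∀ n : ℕ,
      profile (wreath (⊤ : Subgroup (Equiv.Perm ℕ))
          (⊤ : Subgroup (Equiv.Perm (Fin k)))) n =
        Nat.card {p : Nat.Partition n // p.parts.card ≤ k} := by
  intro n
  classical
  set G := wreath (⊤ : Subgroup (Equiv.Perm ℕ)) (⊤ : Subgroup (Equiv.Perm (Fin k)))
  have hlift : ∀ (a b : {s : Set (ℕ × Fin k) // s.Finite ∧ s.ncard = n}),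
      (permSetoid G n).r a b → toPart a = toPart b := by
    rintro a b ⟨g, hgG, him⟩
    obtain ⟨σ, -, f, -, hgdef⟩ := hgG
    have : sizesM b.1 = sizesM a.1 := by
      rw [← him]; exact sizesM_image hgdef a.1
    apply Subtype.ext
    apply Nat.Partition.ext
    show (sizesM a.1).filter _ = (sizesM b.1).filter _
    rw [this]
  refine Nat.card_congr (Equiv.ofBijective
    (Quotient.lift (s := permSetoid G n) toPart hlift) ⟨?_, ?_⟩)
  · intro x y
    induction x using Quotient.ind
    induction y using Quotient.ind
    intro h
    exact Quotient.sound (orbit_of_toPart_eq h)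
  · rintro ⟨p, hp⟩
    obtain ⟨s, hs⟩ := toPart_surjective p hp
    exact ⟨⟦s⟧, hs⟩
end

section
/- Let n be a natural number, let α : Fin n → Type be a family of finite nonempty types, and for each j let H_j be a subgroup of Perm (α j). On E = Σ j, (α j × ℕ), let K = {g ∈ Perm E | ∀ j, ∃ σ ∈ Perm ℕ, ∃ h : ℕ → H_j, ∀ a i, g ⟨j, (a, i)⟩ = ⟨j, (h i a, σ i)⟩} be the direct product of the wreath products H_j ≀ Sym(ℕ), each factor acting on its own summand α j × ℕ. Then K admits no proper normal subgroup of finite index: every normal subgroup of K of finite index equals K. -/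
open Equiv Set

namespace WreathNFQ

noncomputable section

/-! ### permCongr algebra -/

lemma permCongr_mul {α β : Type*} (e : α ≃ β) (p q : Equiv.Perm α) :
    e.permCongr (p * q) = e.permCongr p * e.permCongr q := by
  ext x
  simp [Equiv.permCongr_apply, Equiv.Perm.mul_apply]

lemma permCongr_one {α β : Type*} (e : α ≃ β) :
    e.permCongr (1 : Equiv.Perm α) = 1 := by
  ext x; simp [Equiv.permCongr_apply]

lemma permCongr_pow {α β : Type*} (e : α ≃ β) (p : Equiv.Perm α) (m : ℕ) :
    e.permCongr (p ^ m) = (e.permCongr p) ^ m := by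
  induction m with
  | zero => simpa using permCongr_one e
  | succ m ih => rw [pow_succ, pow_succ, permCongr_mul, ih]

lemma permCongr_inv {α β : Type*} (e : α ≃ β) (p : Equiv.Perm α) :
    e.permCongr p⁻¹ = (e.permCongr p)⁻¹ := by
  apply inv_eq_of_mul_eq_one_right ((permCongr_mul e p p⁻¹).symm.trans ?_) |>.symm
  simp [permCongr_one]

lemma prodCongr_perm_mul {α β : Type*} (p₁ p₂ : Equiv.Perm α) (q₁ q₂ : Equiv.Perm β) :
    (Equiv.prodCongr p₁ q₁) * (Equiv.prodCongr p₂ q₂) = Equiv.prodCongr (p₁ * p₂) (q₁ * q₂) := by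
  ext ⟨a, b⟩ <;> simp [Equiv.Perm.mul_apply]

lemma prodCongr_perm_pow {α β : Type*} (p : Equiv.Perm α) (q : Equiv.Perm β) (m : ℕ) :
    (Equiv.prodCongr p q) ^ m = Equiv.prodCongr (p ^ m) (q ^ m) := by
  induction m with
  | zero => ext ⟨a, b⟩ <;> simp
  | succ m ih => rw [pow_succ, pow_succ, pow_succ, ih, prodCongr_perm_mul]

lemma sumCongr_perm_mul {α β : Type*} (p₁ p₂ : Equiv.Perm α) (q₁ q₂ : Equiv.Perm β) :
    (Equiv.sumCongr p₁ q₁) * (Equiv.sumCongr p₂ q₂) = Equiv.sumCongr (p₁ * p₂) (q₁ * q₂) := by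
  ext x
  cases x <;> simp [Equiv.Perm.mul_apply]

lemma sumCongr_perm_pow {α β : Type*} (p : Equiv.Perm α) (q : Equiv.Perm β) (m : ℕ) :
    (Equiv.sumCongr p q) ^ m = Equiv.sumCongr (p ^ m) (q ^ m) := by
  induction m with
  | zero => ext x; cases x <;> simp
  | succ m ih => rw [pow_succ, pow_succ, pow_succ, ih, sumCongr_perm_mul]

lemma addRight_one_pow (m : ℕ) :
    (Equiv.addRight (1 : ℤ)) ^ m = Equiv.addRight (m : ℤ) := by
  induction m with
  | zero => ext x; simp
  | succ m ih =>
    rw [pow_succ, ih]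
    ext x
    simp [Equiv.Perm.mul_apply]
    push_cast
    ring


/-- regrouping equiv used to take `e`-th roots of the "shift" on `ℤ × ℕ`. -/
def regroup (e : ℕ) (he : 0 < e) : (ℤ × ℕ) ≃ (ℤ × ℕ) where
  toFun x := (x.1 / (e : ℤ), e * x.2 + (x.1 % (e : ℤ)).toNat)
  invFun y := (y.1 * (e : ℤ) + ((y.2 % e : ℕ) : ℤ), y.2 / e)
  left_inv := by
    rintro ⟨t, q⟩
    have he' : (e : ℤ) ≠ 0 := by exact_mod_cast he.ne'
    have h0 : (0 : ℤ) ≤ t % (e : ℤ) := Int.emod_nonneg t he'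
    have h1 : t % (e : ℤ) < (e : ℤ) := Int.emod_lt_of_pos t (by exact_mod_cast he)
    have hr : (t % (e : ℤ)).toNat < e := by omega
    have hmod : (e * q + (t % (e : ℤ)).toNat) % e = (t % (e : ℤ)).toNat := by
      rw [Nat.mul_add_mod, Nat.mod_eq_of_lt hr]
    have hdiv : (e * q + (t % (e : ℤ)).toNat) / e = q := by
      rw [Nat.mul_add_div he, Nat.div_eq_of_lt hr, add_zero]
    refine Prod.ext ?_ (by simpa using hdiv)
    simp only [hmod]
    have : ((t % (e : ℤ)).toNat : ℤ) = t % (e : ℤ) := Int.toNat_of_nonneg h0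
    rw [this]
    have := Int.mul_ediv_add_emod t (e : ℤ)
    linarith [this]
  right_inv := by
    rintro ⟨z, i⟩
    have he' : (e : ℤ) ≠ 0 := by exact_mod_cast he.ne'
    have h0 : (0 : ℤ) ≤ ((i % e : ℕ) : ℤ) := by positivity
    have h1 : ((i % e : ℕ) : ℤ) < (e : ℤ) := by exact_mod_cast Nat.mod_lt i he
    have hdiv : (z * (e : ℤ) + ((i % e : ℕ) : ℤ)) / (e : ℤ) = z := by
      rw [add_comm, Int.add_mul_ediv_right _ _ he', Int.ediv_eq_zero_of_lt h0 h1, zero_add]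
    have hmod : (z * (e : ℤ) + ((i % e : ℕ) : ℤ)) % (e : ℤ) = ((i % e : ℕ) : ℤ) := by
      rw [add_comm, Int.add_mul_emod_self_right, Int.emod_eq_of_lt h0 h1]
    refine Prod.ext (by simpa using hdiv) ?_
    simp only [hmod]
    have : ((i % e : ℕ) : ℤ).toNat = i % e := by omega
    rw [this]
    simp [Nat.div_add_mod, Nat.mul_comm]
  
lemma regroup_shift (e : ℕ) (he : 0 < e) (t : ℤ) (q : ℕ) :
    regroup e he (t + e, q) = (((regroup e he (t, q)).1 + 1), (regroup e he (t, q)).2) := by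
  have he' : (e : ℤ) ≠ 0 := by exact_mod_cast he.ne'
  have hd : (t + (e : ℤ)) / (e : ℤ) = t / (e : ℤ) + 1 := by
    have := Int.add_mul_ediv_right t 1 he'
    simpa using this
  have hm : (t + (e : ℤ)) % (e : ℤ) = t % (e : ℤ) := by
    have : (t + 1 * (e : ℤ)) % (e : ℤ) = t % (e : ℤ) := Int.add_mul_emod_self_right _ _ _
    simpa using this
  simp [regroup, hd, hm]

/-- The "shift" permutation of `ℤ × ℕ`. -/
def sh : Equiv.Perm (ℤ × ℕ) := Equiv.prodCongr (Equiv.addRight (1 : ℤ)) (Equiv.refl ℕ)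

lemma sh_apply (k : ℤ) (i : ℕ) : sh (k, i) = (k + 1, i) := rfl

/-- Any permutation of `ℕ` consisting of ℤ-chains indexed by `ℕ` together with
`ℕ`-many fixed points is an `e`-th power for every `e ≥ 1`. -/
lemma exists_pow_eq (s : Equiv.Perm ℕ) (V : (ℤ × ℕ) ⊕ ℕ ≃ ℕ)
    (h1 : ∀ (k : ℤ) (i : ℕ), s (V (Sum.inl (k, i))) = V (Sum.inl (k + 1, i)))
    (h2 : ∀ m : ℕ, s (V (Sum.inr m)) = V (Sum.inr m))
    (e : ℕ) (he : 0 < e) : ∃ y : Equiv.Perm ℕ, y ^ e = s := by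
  set w : Equiv.Perm (ℤ × ℕ) := (regroup e he).permCongr sh with hw_def
  have hw : w ^ e = sh := by
    rw [hw_def, ← permCongr_pow]
    have hsh : sh ^ e = Equiv.prodCongr (Equiv.addRight (e : ℤ)) (Equiv.refl ℕ) := by
      have : (Equiv.refl ℕ : Equiv.Perm ℕ) ^ e = Equiv.refl ℕ := by
        have : (Equiv.refl ℕ : Equiv.Perm ℕ) = 1 := rfl
        rw [this, one_pow]
      rw [sh, prodCongr_perm_pow, addRight_one_pow, this]
    rw [hsh]
    apply Equiv.ext
    intro x
    rw [Equiv.permCongr_apply]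
    have key : ∀ y : ℤ × ℕ,
        regroup e he ((Equiv.prodCongr (Equiv.addRight (e : ℤ)) (Equiv.refl ℕ)) y)
          = sh (regroup e he y) := by
      rintro ⟨t, q⟩
      have h3 : (Equiv.prodCongr (Equiv.addRight (e : ℤ)) (Equiv.refl ℕ)) (t, q)
          = (t + e, q) := rfl
      have h4 : sh (regroup e he (t, q))
          = ((regroup e he (t, q)).1 + 1, (regroup e he (t, q)).2) := rfl
      rw [h3, h4, regroup_shift]
    rw [key, Equiv.apply_symm_apply]
  refine ⟨V.permCongr (Equiv.sumCongr w 1), ?_⟩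
  rw [← permCongr_pow, sumCongr_perm_pow, hw, one_pow]
  ext x
  rw [Equiv.permCongr_apply]
  have key : ∀ z : (ℤ × ℕ) ⊕ ℕ,
      V ((Equiv.sumCongr sh (1 : Equiv.Perm ℕ)) z) = s (V z) := by
    rintro (⟨k, i⟩ | m)
    · have h3 : (Equiv.sumCongr sh (1 : Equiv.Perm ℕ)) (Sum.inl (k, i))
          = Sum.inl (k + 1, i) := rfl
      rw [h3, h1]
    · have h3 : (Equiv.sumCongr sh (1 : Equiv.Perm ℕ)) (Sum.inr m) = Sum.inr m := rfl
      rw [h3, h2]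
  rw [key, Equiv.apply_symm_apply]

/-- integer coding of nonzero integers by naturals -/
def zenc (k : ℤ) : ℕ := if 0 < k then 2 * (k - 1).toNat else 2 * (-k).toNat - 1

lemma zenc_inj {k l : ℤ} (hk : k ≠ 0) (hl : l ≠ 0) (h : zenc k = zenc l) : k = l := by
  unfold zenc at h
  split_ifs at h <;> omega

lemma zenc_surj (a : ℕ) : ∃ k : ℤ, k ≠ 0 ∧ zenc k = a := by
  rcases Nat.even_or_odd a with ⟨b, hb⟩ | ⟨b, hb⟩
  · refine ⟨(b : ℤ) + 1, by omega, ?_⟩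
    unfold zenc
    rw [if_pos (by omega)]
    omega
  · refine ⟨-((b : ℤ) + 1), by omega, ?_⟩
    unfold zenc
    rw [if_neg (by omega)]
    omega

lemma enum_of_infinite {A : Set ℕ} (hA : A.Infinite) : Nonempty (ℕ ≃ ↥A) := by
  have h1 : Infinite ↥A := hA.to_subtype
  have h2 : Countable ↥A := Subtype.countable
  obtain ⟨d⟩ := nonempty_denumerable_iff.mpr ⟨h2, h1⟩
  exact ⟨(@Denumerable.eqv ↥A d).symm⟩

/-- A permutation of ℕ fixing an infinite set pointwise belongs to every
finite-index normal subgroup. -/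
lemma chain_mem (Φ : Subgroup (Equiv.Perm ℕ)) [Φ.Normal]
    (σ : Equiv.Perm ℕ) (F : Set ℕ) (hF : F.Infinite) (hidx : Φ.index ≠ 0)
    (hfix : ∀ x ∈ F, σ x = x) : σ ∈ Φ := by
  classical
  obtain ⟨eF⟩ := enum_of_infinite hF
  set F₁ : Set ℕ := Set.range (fun i : ℕ => (eF (2 * i) : ℕ)) with hF₁def
  set F₂ : Set ℕ := Set.range (fun i : ℕ => (eF (2 * i + 1) : ℕ)) with hF₂def
  have hF₁F : F₁ ⊆ F := by rintro x ⟨i, rfl⟩; exact (eF (2 * i)).2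
  have hF₂F : F₂ ⊆ F := by rintro x ⟨i, rfl⟩; exact (eF (2 * i + 1)).2
  have hcover : ∀ x ∈ F, x ∈ F₁ ∨ x ∈ F₂ := by
    intro x hx
    set m := eF.symm ⟨x, hx⟩ with hm
    have hxm : (eF m : ℕ) = x := by rw [hm, eF.apply_symm_apply]
    rcases Nat.even_or_odd m with ⟨b, hb⟩ | ⟨b, hb⟩
    · exact Or.inl ⟨b, by show (eF (2 * b) : ℕ) = x; rw [show 2 * b = m by omega, hxm]⟩
    · exact Or.inr ⟨b, by show (eF (2 * b + 1) : ℕ) = x; rw [show 2 * b + 1 = m by omega, hxm]⟩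
  have hdisj : ∀ x, x ∈ F₁ → x ∈ F₂ → False := by
    rintro x ⟨i, hi⟩ ⟨i', hi'⟩
    have : eF (2 * i) = eF (2 * i' + 1) := Subtype.ext (hi.trans hi'.symm)
    have := eF.injective this
    omega
  set A : Set ℕ := Fᶜ ∪ F₁ with hAdef
  have hAinf : A.Infinite := by
    apply Set.Infinite.mono (Set.subset_union_right)
    apply Set.infinite_range_of_injective
    intro i i' h
    have := eF.injective (Subtype.ext h)
    omega
  have hF₂inf : F₂.Infinite := by
    apply Set.infinite_range_of_injective
    intro i i' h
    have := eF.injective (Subtype.ext h)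
    omega
  have hAc : ∀ x, x ∉ A ↔ x ∈ F₂ := by
    intro x
    constructor
    · intro hx
      simp only [hAdef, Set.mem_union, Set.mem_compl_iff, not_or, not_not] at hx
      rcases hcover x hx.1 with h | h
      · exact absurd h hx.2
      · exact h
    · intro hx hA
      rcases hA with h | h
      · exact h (hF₂F hx)
      · exact hdisj x h hx
  have hfix₂ : ∀ x ∈ F₂, σ x = x := fun x hx => hfix x (hF₂F hx)
  -- σ preserves A
  have hσA : ∀ x, x ∈ A ↔ σ x ∈ A := by
    intro x
    constructor
    · intro hx
      by_contra h
      have hx2 : σ x ∈ F₂ := (hAc _).1 h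
      have : σ (σ x) = σ x := hfix₂ _ hx2
      have : σ x = x := σ.injective this
      rw [this] at hx2
      exact (hAc x).2 hx2 hx
    · intro hx
      by_contra h
      have hx2 : x ∈ F₂ := (hAc _).1 h
      have : σ x = x := hfix₂ _ hx2
      rw [this] at hx
      exact (hAc x).2 hx2 hx
  set σA : Equiv.Perm ↥A := σ.subtypePerm (fun x => (hσA x).symm) with hσAdef
  obtain ⟨eA⟩ := enum_of_infinite hAinf
  obtain ⟨eG⟩ := enum_of_infinite hF₂inf
  -- index-level copy of σ on slice 0
  set p₀ : Equiv.Perm ℕ := eA.symm.permCongr σA with hp₀def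
  have hp₀ : ∀ i : ℕ, (eA (p₀ i) : ℕ) = σ (eA i) := by
    intro i
    rw [hp₀def, Equiv.permCongr_apply]
    simp only [Equiv.symm_symm, Equiv.apply_symm_apply]
    rfl
  -- the master equiv
  set Λf : (ℤ × ℕ) ⊕ ℕ → ℕ := fun z =>
    match z with
    | Sum.inl (k, i) => if k = 0 then (eA i : ℕ) else (eG (2 * Nat.pair (zenc k) i) : ℕ)
    | Sum.inr m => (eG (2 * m + 1) : ℕ) with hΛf
  have hmemA : ∀ i, (eA i : ℕ) ∈ A := fun i => (eA i).2
  have hmemG : ∀ m, (eG m : ℕ) ∈ F₂ := fun m => (eG m).2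
  have hΛbij : Function.Bijective Λf := by
    constructor
    · rintro (⟨k, i⟩ | m) (⟨k', i'⟩ | m') h <;> simp only [hΛf] at h
      · split_ifs at h with h1 h2 h2
        · have := eA.injective (Subtype.ext h); rw [h1, h2, this]
        · exact absurd ((hAc _).2 (h ▸ hmemG _)) (by simpa using hmemA i)
        · exact absurd ((hAc _).2 (h.symm ▸ hmemG _)) (by simpa using hmemA i')
        · have := eG.injective (Subtype.ext h)
          have hp := Nat.pair_eq_pair.1 (by omega : Nat.pair (zenc k) i = Nat.pair (zenc k') i')
          rw [zenc_inj h1 h2 hp.1, hp.2]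
      · split_ifs at h with h1
        · exact absurd ((hAc _).2 (h ▸ hmemG _)) (by simpa using hmemA i)
        · exact absurd (eG.injective (Subtype.ext h)) (by omega)
      · split_ifs at h with h1
        · exact absurd ((hAc _).2 (h.symm ▸ hmemG _)) (by simpa using hmemA i')
        · exact absurd (eG.injective (Subtype.ext h)) (by omega)
      · have h2 := eG.injective (Subtype.ext h)
        have : m = m' := by omega
        rw [this]
    · intro x
      by_cases hx : x ∈ A
      · refine ⟨Sum.inl (0, eA.symm ⟨x, hx⟩), ?_⟩
        show (if (0 : ℤ) = 0 then (eA (eA.symm ⟨x, hx⟩) : ℕ) else _) = x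
        rw [if_pos rfl, Equiv.apply_symm_apply]
      · have hx2 : x ∈ F₂ := (hAc _).1 hx
        set m := eG.symm ⟨x, hx2⟩ with hm
        have hxm : (eG m : ℕ) = x := by rw [hm, eG.apply_symm_apply]
        rcases Nat.even_or_odd m with ⟨b, hb⟩ | ⟨b, hb⟩
        · obtain ⟨k, hk, hke⟩ := zenc_surj (Nat.unpair b).1
          refine ⟨Sum.inl (k, (Nat.unpair b).2), ?_⟩
          simp only [hΛf, if_neg hk, hke, Nat.pair_unpair]
          rw [show 2 * b = m by omega, hxm]
        · exact ⟨Sum.inr b, by simp only [hΛf]; rw [show 2 * b + 1 = m by omega, hxm]⟩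
  set Λ : (ℤ × ℕ) ⊕ ℕ ≃ ℕ := Equiv.ofBijective Λf hΛbij with hΛdef
  have hΛ : ∀ z, Λ z = Λf z := fun z => rfl
  have hΛ0 : ∀ i : ℕ, Λ (Sum.inl ((0 : ℤ), i)) = (eA i : ℕ) := by
    intro i
    rw [hΛ]
    show (if (0 : ℤ) = 0 then (eA i : ℕ) else (eG (2 * Nat.pair (zenc 0) i) : ℕ)) = _
    rw [if_pos rfl]
  have hΛne : ∀ (k : ℤ) (i : ℕ), k ≠ 0 →
      Λ (Sum.inl (k, i)) = (eG (2 * Nat.pair (zenc k) i) : ℕ) := by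
    intro k i hk
    rw [hΛ]
    show (if k = 0 then (eA i : ℕ) else (eG (2 * Nat.pair (zenc k) i) : ℕ)) = _
    rw [if_neg hk]
  have hΛinr : ∀ m : ℕ, Λ (Sum.inr m) = (eG (2 * m + 1) : ℕ) := fun m => rfl
  -- the thick chain-shift s and the chain of copies D
  set shiftL : Equiv.Perm ((ℤ × ℕ) ⊕ ℕ) := Equiv.sumCongr sh 1 with hshiftL
  set s : Equiv.Perm ℕ := Λ.permCongr shiftL with hsdef
  have hs_inl : ∀ k i, s (Λ (Sum.inl (k, i))) = Λ (Sum.inl (k + 1, i)) := by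
    intro k i
    rw [hsdef, Equiv.permCongr_apply, Equiv.symm_apply_apply]
    rfl
  have hs_inr : ∀ m, s (Λ (Sum.inr m)) = Λ (Sum.inr m) := by
    intro m
    rw [hsdef, Equiv.permCongr_apply, Equiv.symm_apply_apply]
    rfl
  have hsΦ : s ∈ Φ := by
    obtain ⟨y, hy⟩ := exists_pow_eq s Λ hs_inl hs_inr Φ.index (Nat.pos_of_ne_zero hidx)
    exact hy ▸ Subgroup.pow_index_mem Φ y
  -- copies of p₀ along nonnegative slices
  set copy : Equiv.Perm (ℤ × ℕ) :=
    { toFun := fun x => (x.1, if 0 ≤ x.1 then p₀ x.2 else x.2)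
      invFun := fun x => (x.1, if 0 ≤ x.1 then p₀⁻¹ x.2 else x.2)
      left_inv := by rintro ⟨k, i⟩; by_cases h : 0 ≤ k <;> simp [h]
      right_inv := by rintro ⟨k, i⟩; by_cases h : 0 ≤ k <;> simp [h] } with hcopy
  have hshiftL_inl : ∀ (k : ℤ) (i : ℕ), shiftL (Sum.inl (k, i)) = Sum.inl (k + 1, i) :=
    fun k i => rfl
  have hshiftL_inr : ∀ m : ℕ, shiftL (Sum.inr m) = Sum.inr m := fun m => rfl
  have hshiftL_inv_inl : ∀ (k : ℤ) (i : ℕ), shiftL⁻¹ (Sum.inl (k, i)) = Sum.inl (k - 1, i) := by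
    intro k i
    rw [Equiv.Perm.inv_def, Equiv.symm_apply_eq, hshiftL_inl]
    norm_num
  have hshiftL_inv_inr : ∀ m : ℕ, shiftL⁻¹ (Sum.inr m) = Sum.inr m := by
    intro m
    rw [Equiv.Perm.inv_def, Equiv.symm_apply_eq, hshiftL_inr]
  set cp : Equiv.Perm ((ℤ × ℕ) ⊕ ℕ) := Equiv.sumCongr copy 1 with hcpdef
  have hcp_inl : ∀ (k : ℤ) (i : ℕ),
      cp (Sum.inl (k, i)) = Sum.inl (k, if 0 ≤ k then p₀ i else i) := fun k i => rfl
  have hcp_inr : ∀ m : ℕ, cp (Sum.inr m) = Sum.inr m := fun m => rfl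
  have hcp_inv_inl : ∀ (k : ℤ) (i : ℕ),
      cp⁻¹ (Sum.inl (k, i)) = Sum.inl (k, if 0 ≤ k then p₀⁻¹ i else i) := by
    intro k i
    rw [Equiv.Perm.inv_def, Equiv.symm_apply_eq, hcp_inl]
    by_cases h : 0 ≤ k <;> simp [h]
  have hcp_inv_inr : ∀ m : ℕ, cp⁻¹ (Sum.inr m) = Sum.inr m := by
    intro m
    rw [Equiv.Perm.inv_def, Equiv.symm_apply_eq, hcp_inr]
  set D : Equiv.Perm ℕ := Λ.permCongr cp with hDdef
  have happly : ∀ z, (D * (s * (D⁻¹ * s⁻¹))) (Λ z) = Λ (cp (shiftL (cp⁻¹ (shiftL⁻¹ z)))) := by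
    intro z
    simp only [Equiv.Perm.mul_apply, hsdef, hDdef, ← permCongr_inv,
      Equiv.permCongr_apply, Equiv.symm_apply_apply]
  have main : ∀ z, σ (Λ z) = (D * (s * (D⁻¹ * s⁻¹))) (Λ z) := by
    rintro (⟨k, i⟩ | m)
    · rw [happly]
      by_cases hk : k = 0
      · subst hk
        have hL : σ (Λ (Sum.inl ((0 : ℤ), i))) = (eA (p₀ i) : ℕ) := by
          rw [hΛ0, hp₀]
        have hR : cp (shiftL (cp⁻¹ (shiftL⁻¹ (Sum.inl ((0 : ℤ), i)))))
            = Sum.inl ((0 : ℤ), p₀ i) := by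
          rw [hshiftL_inv_inl, hcp_inv_inl, if_neg (by norm_num), hshiftL_inl,
            show (0 : ℤ) - 1 + 1 = 0 by ring, hcp_inl, if_pos le_rfl]
        rw [hL, hR, hΛ0]
      · have hLmem : Λ (Sum.inl (k, i)) ∈ F₂ := by
          rw [hΛ]; simp only [hΛf, if_neg hk]; exact hmemG _
        have hL : σ (Λ (Sum.inl (k, i))) = Λ (Sum.inl (k, i)) := hfix₂ _ hLmem
        have hR : cp (shiftL (cp⁻¹ (shiftL⁻¹ (Sum.inl (k, i))))) = Sum.inl (k, i) := by
          rw [hshiftL_inv_inl, hcp_inv_inl, hshiftL_inl, hcp_inl,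
            show k - 1 + 1 = k by ring]
          by_cases h1 : 0 ≤ k - 1
          · rw [if_pos h1, if_pos (by omega)]
            simp
          · rw [if_neg h1, if_neg (by omega)]
        rw [hL, hR]
    · rw [happly, hshiftL_inv_inr, hcp_inv_inr, hshiftL_inr, hcp_inr]
      have hLmem : Λ (Sum.inr m) ∈ F₂ := by
        rw [hΛinr]; exact hmemG _
      exact hfix₂ _ hLmem
  have hσeq : σ = D * (s * (D⁻¹ * s⁻¹)) := by
    apply Equiv.ext
    intro x
    have hx : Λ (Λ.symm x) = x := Λ.apply_symm_apply x
    calc σ x = σ (Λ (Λ.symm x)) := by rw [hx]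
      _ = (D * (s * (D⁻¹ * s⁻¹))) (Λ (Λ.symm x)) := main _
      _ = (D * (s * (D⁻¹ * s⁻¹))) x := by rw [hx]
  have hσeq' : σ = (D * s * D⁻¹) * s⁻¹ := by
    rw [hσeq]; group
  rw [hσeq']
  exact Φ.mul_mem (Subgroup.Normal.conj_mem ‹Φ.Normal› s hsΦ D) (Φ.inv_mem hsΦ)

set_option maxHeartbeats 1600000 in
/-- every permutation of ℕ is a product of two permutations each of which
fixes an infinite set pointwise. -/
lemma exists_decomp (σ : Equiv.Perm ℕ) :
    ∃ σ₁ σ₂ : Equiv.Perm ℕ, σ = σ₁ * σ₂ ∧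
      (∃ F : Set ℕ, F.Infinite ∧ ∀ x ∈ F, σ₁ x = x) ∧
      (∃ F : Set ℕ, F.Infinite ∧ ∀ x ∈ F, σ₂ x = x) := by
  classical
  by_cases hfix : {x : ℕ | σ x = x}.Infinite
  · exact ⟨σ, 1, by rw [mul_one], ⟨_, hfix, fun x hx => hx⟩,
      ⟨Set.univ, Set.infinite_univ, fun x _ => rfl⟩⟩
  · set M : Set ℕ := {x : ℕ | σ x ≠ x} with hM
    have hMinf : M.Infinite := by
      have hfin : {x : ℕ | σ x = x}.Finite := Set.not_infinite.1 hfix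
      have : M = {x : ℕ | σ x = x}ᶜ := by
        ext x; simp [hM]
      rw [this]
      exact hfin.infinite_compl
    -- greedy choice of a sparse set
    have hex : ∀ t : Finset ℕ, (M \ (↑t ∪ ↑(t.image σ) ∪ ↑(t.image σ.symm))).Nonempty :=
      fun t => (hMinf.diff (((t.finite_toSet).union (t.image σ).finite_toSet).union
        (t.image σ.symm).finite_toSet |>.subset (by intro x hx; simpa using hx))).nonempty
    set pick : Finset ℕ → ℕ := fun t => (hex t).choose with hpick
    have hpick_spec : ∀ t : Finset ℕ, pick t ∈ M \ (↑t ∪ ↑(t.image σ) ∪ ↑(t.image σ.symm)) :=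
      fun t => (hex t).choose_spec
    set used : ℕ → Finset ℕ := fun n => Nat.rec ∅ (fun _ u => insert (pick u) u) n with hused
    have hused_succ : ∀ n, used (n + 1) = insert (pick (used n)) (used n) := fun n => rfl
    set f : ℕ → ℕ := fun n => pick (used n) with hf
    have hf_mem_used : ∀ n, f n ∈ used (n + 1) := by
      intro n; rw [hused_succ]; exact Finset.mem_insert_self _ _
    have hused_mono : ∀ {m n : ℕ}, m ≤ n → used m ⊆ used n := by
      intro m n h
      induction n with
      | zero => simpa [Nat.le_zero.1 h]
      | succ n ih =>
        rcases Nat.lt_or_ge m (n + 1) with h' | h'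
        · exact (ih (by omega)).trans (by rw [hused_succ]; exact Finset.subset_insert _ _)
        · have : m = n + 1 := by omega
          rw [this]
    have hkey : ∀ {m n : ℕ}, m < n → f n ≠ f m ∧ f n ≠ σ (f m) ∧ f n ≠ σ.symm (f m) := by
      intro m n h
      have hm : f m ∈ used n := hused_mono (by omega : m + 1 ≤ n) (hf_mem_used m)
      have hnot := (hpick_spec (used n)).2
      refine ⟨fun hcon => hnot ?_, fun hcon => hnot ?_, fun hcon => hnot ?_⟩
      · refine Or.inl (Or.inl (Finset.mem_coe.mpr ?_))
        show f n ∈ used n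
        rw [hcon]
        exact hm
      · exact Or.inl (Or.inr (Finset.mem_coe.mpr
          (Finset.mem_image.mpr ⟨f m, hm, hcon.symm⟩)))
      · exact Or.inr (Finset.mem_coe.mpr (Finset.mem_image.mpr ⟨f m, hm, hcon.symm⟩))
    have hfM : ∀ n, σ (f n) ≠ f n := fun n => (hpick_spec (used n)).1
    have hinj : Function.Injective f := by
      intro m n h
      by_contra hne
      rcases Nat.lt_or_ge m n with h' | h'
      · exact (hkey h').1 h.symm
      · exact (hkey (by omega : n < m)).1 h
    -- the key disjointness: f a ≠ σ (f b) for all a b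
    have hdisj : ∀ a b : ℕ, f a ≠ σ (f b) := by
      intro a b
      rcases lt_trichotomy a b with h | h | h
      · intro hcon
        have := (hkey h).2.2
        apply this
        rw [hcon, Equiv.symm_apply_apply]
      · rw [h]; exact fun hcon => hfM b hcon.symm
      · exact (hkey h).2.1
    clear_value f pick used
    set X : Set ℕ := f '' {i : ℕ | Even i} with hX
    have hXinf : X.Infinite := by
      apply Set.infinite_of_injective_forall_mem (f := fun n : ℕ => f (2 * n))
      · intro a b h
        have := hinj h; omega
      · intro a; exact ⟨2 * a, ⟨a, by omega⟩, rfl⟩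
    have hXdisj : ∀ x ∈ X, ∀ y ∈ X, x ≠ σ y := by
      rintro x ⟨a, _, rfl⟩ y ⟨b, _, rfl⟩
      exact hdisj a b
    -- σ₂ : involution swapping X and σ '' X
    have hXσX : ∀ x, x ∈ X → x ∈ σ '' X → False := by
      rintro x hx ⟨y, hy, rfl⟩
      exact hXdisj _ hx _ hy rfl
    set g : ℕ → ℕ := fun x => if x ∈ X then σ x else if x ∈ σ '' X then σ.symm x else x
      with hg
    have hginv : Function.Involutive g := by
      intro x
      by_cases hx : x ∈ X
      · rw [hg]
        simp only [if_pos hx]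
        have h1 : σ x ∈ σ '' X := ⟨x, hx, rfl⟩
        have h2 : σ x ∉ X := fun hc => hXσX _ hc h1
        rw [if_neg h2, if_pos h1, Equiv.symm_apply_apply]
      · by_cases hx' : x ∈ σ '' X
        · rw [hg]
          simp only [if_neg hx, if_pos hx']
          obtain ⟨y, hy, rfl⟩ := hx'
          rw [Equiv.symm_apply_apply, if_pos hy]
        · show g (g x) = x
          rw [hg]
          simp only [if_neg hx, if_neg hx']
    set σ₂ : Equiv.Perm ℕ := hginv.toPerm with hσ₂
    have hσ₂sq : σ₂ * σ₂ = 1 := by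
      apply Equiv.ext
      intro x
      show g (g x) = x
      exact hginv x
    refine ⟨σ * σ₂, σ₂, by rw [mul_assoc, hσ₂sq, mul_one], ?_, ?_⟩
    · -- σ * σ₂ fixes σ '' X pointwise
      refine ⟨σ '' X, hXinf.image (Set.injOn_of_injective σ.injective), ?_⟩
      rintro x ⟨y, hy, rfl⟩
      show σ (σ₂ (σ y)) = σ y
      have h1 : σ y ∈ σ '' X := ⟨y, hy, rfl⟩
      have h2 : σ y ∉ X := fun hc => hXσX _ hc h1
      have : σ₂ (σ y) = y := by
        show g (σ y) = y
        rw [hg]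
        simp only [if_neg h2, if_pos h1]
        rw [Equiv.symm_apply_apply]
      rw [this]
    · -- σ₂ fixes f '' odds pointwise
      refine ⟨f '' {i : ℕ | ¬ Even i}, ?_, ?_⟩
      · apply Set.infinite_of_injective_forall_mem (f := fun n : ℕ => f (2 * n + 1))
        · intro a b h; have := hinj h; omega
        · intro a
          refine ⟨2 * a + 1, ?_, rfl⟩
          show ¬ Even (2 * a + 1)
          rintro ⟨r, hr⟩
          omega
      · rintro x ⟨a, ha, rfl⟩
        show g (f a) = f a
        have h1 : f a ∉ X := by
          rintro ⟨b, hb, hc⟩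
          have hba := hinj hc
          rw [hba] at hb
          exact ha hb
        have h2 : f a ∉ σ '' X := by
          rintro ⟨y, hy, hc⟩
          obtain ⟨b, _, rfl⟩ := hy
          exact hdisj a b hc.symm
        rw [hg]
        simp only [if_neg h1, if_neg h2]

/-- The infinite symmetric group `Perm ℕ` has no proper normal subgroup of
finite index. -/
lemma perm_nat_top (Φ : Subgroup (Equiv.Perm ℕ))
    (hn : ∀ τ : Equiv.Perm ℕ, ∀ x ∈ Φ, τ * x * τ⁻¹ ∈ Φ)
    (hidx : Φ.index ≠ 0) : ∀ σ : Equiv.Perm ℕ, σ ∈ Φ := by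
  haveI : Φ.Normal := ⟨fun x hx g => hn g x hx⟩
  intro σ
  obtain ⟨σ₁, σ₂, heq, ⟨F₁, hF₁, hfix₁⟩, ⟨F₂, hF₂, hfix₂⟩⟩ := exists_decomp σ
  rw [heq]
  exact Φ.mul_mem (chain_mem Φ σ₁ F₁ hF₁ hidx hfix₁) (chain_mem Φ σ₂ F₂ hF₂ hidx hfix₂)

/-! ### the parity-respecting pairing `ℤ × ℕ ≃ ℕ` with slice `0` the evens -/

def psiFun : ℤ × ℕ → ℕ := fun x =>
  if x.1 = 0 then 2 * x.2 else 2 * Nat.pair (zenc x.1) x.2 + 1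

lemma psiFun_bij : Function.Bijective psiFun := by
  constructor
  · rintro ⟨k, i⟩ ⟨k', i'⟩ h
    simp only [psiFun] at h
    split_ifs at h with h1 h2 h2
    · rw [h1, h2, show i = i' from by omega]
    · omega
    · omega
    · have := Nat.pair_eq_pair.1 (by omega : Nat.pair (zenc k) i = Nat.pair (zenc k') i')
      rw [zenc_inj h1 h2 this.1, this.2]
  · intro m
    rcases Nat.even_or_odd m with ⟨b, hb⟩ | ⟨b, hb⟩
    · refine ⟨(0, b), ?_⟩
      show (if (0 : ℤ) = 0 then 2 * b else 2 * Nat.pair (zenc 0) b + 1) = m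
      rw [if_pos rfl]
      omega
    · obtain ⟨k, hk, hke⟩ := zenc_surj (Nat.unpair b).1
      refine ⟨(k, (Nat.unpair b).2), ?_⟩
      simp only [psiFun, if_neg hk, hke, Nat.pair_unpair]
      omega

def psi : (ℤ × ℕ) ≃ ℕ := Equiv.ofBijective psiFun psiFun_bij

lemma psi_zero (i : ℕ) : psi (0, i) = 2 * i := by
  show psiFun (0, i) = 2 * i
  show (if (0 : ℤ) = 0 then 2 * i else 2 * Nat.pair (zenc 0) i + 1) = 2 * i
  rw [if_pos rfl]

lemma psi_ne {k : ℤ} (i : ℕ) (hk : k ≠ 0) : psi (k, i) = 2 * Nat.pair (zenc k) i + 1 := by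
  show psiFun (k, i) = _
  show (if k = 0 then 2 * i else 2 * Nat.pair (zenc k) i + 1) = _
  rw [if_neg hk]

lemma psi_odd {k : ℤ} (i : ℕ) (hk : k ≠ 0) : ¬ Even (psi (k, i)) := by
  rw [psi_ne i hk]
  rintro ⟨r, hr⟩
  omega

/-- parity swap on ℕ -/
def swapPar : Equiv.Perm ℕ :=
  Function.Involutive.toPerm (fun m => if m % 2 = 0 then m + 1 else m - 1)
    (by intro m; dsimp only; split_ifs <;> omega)

lemma swapPar_apply (m : ℕ) : swapPar m = if m % 2 = 0 then m + 1 else m - 1 := rfl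

/-- the odd version of psi: slice `0` is the odds, other slices even -/
def psi' : (ℤ × ℕ) ≃ ℕ := psi.trans swapPar

lemma psi'_zero (i : ℕ) : psi' (0, i) = 2 * i + 1 := by
  show swapPar (psi (0, i)) = 2 * i + 1
  rw [psi_zero, swapPar_apply, if_pos (by omega)]

lemma psi'_even {k : ℤ} (i : ℕ) (hk : k ≠ 0) : Even (psi' (k, i)) := by
  show Even (swapPar (psi (k, i)))
  rw [psi_ne i hk, swapPar_apply]
  have : (2 * Nat.pair (zenc k) i + 1) % 2 = 1 := by omega
  rw [if_neg (by omega)]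
  exact ⟨Nat.pair (zenc k) i, by omega⟩

end
end WreathNFQ

/-- The direct product `∏_j (H_j ≀ Sym(ℕ))` of wreath products, each factor
acting on its own summand `α j × ℕ` of `E = Σ j, α j × ℕ`. -/
def prodWreath {n : ℕ} {α : Fin n → Type*}
    (H : ∀ j, Subgroup (Equiv.Perm (α j))) :
    Subgroup (Equiv.Perm (Σ j, α j × ℕ)) where
  carrier := {g | ∀ j, ∃ σ : Equiv.Perm ℕ, ∃ h : ℕ → Equiv.Perm (α j),
    (∀ i, h i ∈ H j) ∧ ∀ (a : α j) (i : ℕ), g ⟨j, (a, i)⟩ = ⟨j, (h i a, σ i)⟩}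
  one_mem' := fun j => ⟨1, 1, fun _ => (H j).one_mem, fun _ _ => rfl⟩
  mul_mem' := by
    intro g g' hg hg' j
    obtain ⟨σ, h, hmem, hgj⟩ := hg j
    obtain ⟨σ', h', hmem', hgj'⟩ := hg' j
    refine ⟨σ * σ', fun i => h (σ' i) * h' i,
      fun i => (H j).mul_mem (hmem _) (hmem' _), fun a i => ?_⟩
    simp [Equiv.Perm.mul_apply, hgj', hgj]
  inv_mem' := by
    intro g hg j
    obtain ⟨σ, h, hmem, hgj⟩ := hg j
    refine ⟨σ⁻¹, fun i => (h (σ⁻¹ i))⁻¹,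
      fun i => (H j).inv_mem (hmem _), fun a i => ?_⟩
    have key : g ⟨j, ((h (σ⁻¹ i))⁻¹ a, σ⁻¹ i)⟩ = ⟨j, (a, i)⟩ := by
      rw [hgj]; simp
    rw [← key, ← Equiv.Perm.mul_apply, inv_mul_cancel, Equiv.Perm.one_apply]


namespace WreathNFQ
noncomputable section

variable {n : ℕ} {α : Fin n → Type*}

/-- the permutation of `β × ℕ` given by a fibered family of permutations of `β` -/
def fiberPerm {β : Type*} (h : ℕ → Equiv.Perm β) : Equiv.Perm (β × ℕ) where
  toFun p := (h p.2 p.1, p.2)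
  invFun p := ((h p.2)⁻¹ p.1, p.2)
  left_inv := by rintro ⟨a, i⟩; simp
  right_inv := by rintro ⟨a, i⟩; simp

/-- "top" element: acts by `σs j` on the ℕ-coordinate of the summand `j` -/
def familyTop (σs : ∀ j : Fin n, Equiv.Perm ℕ) : Equiv.Perm (Σ j, α j × ℕ) :=
  Equiv.sigmaCongrRight (fun j => Equiv.prodCongr (Equiv.refl (α j)) (σs j))

/-- "base" element: acts by `hs j i` on the `α j`-coordinate over position `i` -/
def familyBase (hs : ∀ j : Fin n, ℕ → Equiv.Perm (α j)) : Equiv.Perm (Σ j, α j × ℕ) :=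
  Equiv.sigmaCongrRight (fun j => fiberPerm (hs j))

@[simp] lemma familyTop_apply (σs : ∀ j : Fin n, Equiv.Perm ℕ) (j : Fin n) (a : α j) (i : ℕ) :
    familyTop σs ⟨j, (a, i)⟩ = ⟨j, (a, σs j i)⟩ := rfl

@[simp] lemma familyBase_apply (hs : ∀ j : Fin n, ℕ → Equiv.Perm (α j)) (j : Fin n)
    (a : α j) (i : ℕ) : familyBase hs ⟨j, (a, i)⟩ = ⟨j, (hs j i a, i)⟩ := rfl

lemma familyTop_mul (σs τs : ∀ j : Fin n, Equiv.Perm ℕ) :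
    familyTop (α := α) σs * familyTop τs = familyTop (fun j => σs j * τs j) := by
  apply Equiv.ext
  rintro ⟨j, a, i⟩
  rfl

lemma familyTop_one : familyTop (α := α) (fun _ => 1) = 1 := by
  apply Equiv.ext
  rintro ⟨j, a, i⟩
  rfl

lemma familyTop_inv (σs : ∀ j : Fin n, Equiv.Perm ℕ) :
    (familyTop (α := α) σs)⁻¹ = familyTop (fun j => (σs j)⁻¹) := by
  apply inv_eq_of_mul_eq_one_right
  rw [familyTop_mul]
  have : (fun j => σs j * (σs j)⁻¹) = (fun _ : Fin n => (1 : Equiv.Perm ℕ)) := by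
    funext j; rw [mul_inv_cancel]
  rw [this, familyTop_one]

lemma familyBase_mul (hs ks : ∀ j : Fin n, ℕ → Equiv.Perm (α j)) :
    familyBase hs * familyBase ks = familyBase (fun j i => hs j i * ks j i) := by
  apply Equiv.ext
  rintro ⟨j, a, i⟩
  rfl

lemma familyBase_one : familyBase (α := α) (fun _ _ => 1) = 1 := by
  apply Equiv.ext
  rintro ⟨j, a, i⟩
  rfl

lemma familyBase_inv (hs : ∀ j : Fin n, ℕ → Equiv.Perm (α j)) :
    (familyBase hs)⁻¹ = familyBase (fun j i => (hs j i)⁻¹) := by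
  apply inv_eq_of_mul_eq_one_right
  rw [familyBase_mul]
  have : (fun j i => hs j i * (hs j i)⁻¹) = (fun (_ : Fin n) (_ : ℕ) => (1 : Equiv.Perm (α _))) := by
    funext j i; rw [mul_inv_cancel]
  rw [this, familyBase_one]

lemma familyTop_conj_base (σs : ∀ j : Fin n, Equiv.Perm ℕ)
    (hs : ∀ j : Fin n, ℕ → Equiv.Perm (α j)) :
    familyTop σs * familyBase hs * (familyTop σs)⁻¹
      = familyBase (fun j i => hs j ((σs j)⁻¹ i)) := by
  apply Equiv.ext
  rintro ⟨j, a, i⟩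
  rw [familyTop_inv]
  show familyTop σs (familyBase hs (familyTop (fun j => (σs j)⁻¹) ⟨j, (a, i)⟩)) = _
  rw [familyTop_apply, familyBase_apply, familyTop_apply, familyBase_apply]
  simp

variable (H : ∀ j, Subgroup (Equiv.Perm (α j)))

lemma memTop (σs : ∀ j : Fin n, Equiv.Perm ℕ) : familyTop σs ∈ prodWreath H :=
  fun j => ⟨σs j, 1, fun _ => (H j).one_mem, fun _ _ => rfl⟩

lemma memBase (hs : ∀ j : Fin n, ℕ → Equiv.Perm (α j)) (hval : ∀ j i, hs j i ∈ H j) :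
    familyBase hs ∈ prodWreath H :=
  fun j => ⟨1, hs j, hval j, fun _ _ => rfl⟩


section MainProof

variable {N : Subgroup (Equiv.Perm (Σ j, α j × ℕ))}

/-- every "top" element of the product wreath group lies in `N` -/
lemma top_mem_N
    (hnormal : ∀ k ∈ prodWreath H, ∀ x ∈ N, k * x * k⁻¹ ∈ N)
    (hfinq : Finite ((prodWreath H) ⧸ (N.subgroupOf (prodWreath H))))
    (σs : ∀ j : Fin n, Equiv.Perm ℕ) : familyTop σs ∈ N := by
  classical
  -- single-coordinate tops
  have hsingle : ∀ (j : Fin n) (σ : Equiv.Perm ℕ),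
      familyTop (α := α) (fun j' => if j' = j then σ else 1) ∈ N := by
    intro j
    set Φ : Subgroup (Equiv.Perm ℕ) :=
      { carrier := {σ : Equiv.Perm ℕ |
          familyTop (α := α) (fun j' => if j' = j then σ else 1) ∈ N}
        one_mem' := by
          show familyTop (α := α) (fun j' => if j' = j then 1 else 1) ∈ N
          have : (fun j' : Fin n => if j' = j then (1 : Equiv.Perm ℕ) else 1)
              = fun _ => 1 := by funext j'; rw [ite_self]
          rw [this, familyTop_one]
          exact N.one_mem
        mul_mem' := by
          intro a b ha hb
          show familyTop (α := α) (fun j' => if j' = j then a * b else 1) ∈ N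
          have : (fun j' : Fin n => if j' = j then a * b else 1)
              = fun j' => (if j' = j then a else 1) * (if j' = j then b else 1) := by
            funext j'
            by_cases h : j' = j <;> simp [h]
          rw [this, ← familyTop_mul]
          exact N.mul_mem ha hb
        inv_mem' := by
          intro a ha
          show familyTop (α := α) (fun j' => if j' = j then a⁻¹ else 1) ∈ N
          have : (fun j' : Fin n => if j' = j then a⁻¹ else 1)
              = fun j' => (if j' = j then a else 1)⁻¹ := by
            funext j'
            by_cases h : j' = j <;> simp [h]
          rw [this, ← familyTop_inv]
          exact N.inv_mem ha } with hΦdef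
    have hΦmem : ∀ σ : Equiv.Perm ℕ, σ ∈ Φ ↔
        familyTop (α := α) (fun j' => if j' = j then σ else 1) ∈ N := fun σ => Iff.rfl
    have hΦn : ∀ τ : Equiv.Perm ℕ, ∀ x ∈ Φ, τ * x * τ⁻¹ ∈ Φ := by
      intro τ x hx
      rw [hΦmem]
      have : (fun j' : Fin n => if j' = j then τ * x * τ⁻¹ else 1)
          = fun j' => (if j' = j then τ else 1) * (if j' = j then x else 1)
              * (if j' = j then τ else 1)⁻¹ := by
        funext j'
        by_cases h : j' = j <;> simp [h]
      rw [this]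
      have h2 : familyTop (α := α) (fun j' => ((if j' = j then τ else 1) *
          (if j' = j then x else 1)) * (if j' = j then τ else 1)⁻¹)
          = familyTop (fun j' => if j' = j then τ else 1) *
            familyTop (fun j' => if j' = j then x else 1) *
            (familyTop (fun j' => if j' = j then τ else 1))⁻¹ := by
        rw [familyTop_inv, familyTop_mul, familyTop_mul]
      rw [show (fun j' : Fin n => (if j' = j then τ else 1) * (if j' = j then x else 1)
          * (if j' = j then τ else 1)⁻¹) = fun j' => ((if j' = j then τ else 1) *
          (if j' = j then x else 1)) * (if j' = j then τ else 1)⁻¹ from rfl, h2]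
      exact hnormal _ (memTop H _) _ ((hΦmem x).1 hx)
    have hΦidx : Φ.index ≠ 0 := by
      have hinj : Function.Injective (fun q : Equiv.Perm ℕ ⧸ Φ =>
          Quotient.liftOn' q (fun σ => (QuotientGroup.mk
            (⟨familyTop (fun j' => if j' = j then σ else 1), memTop H _⟩ : prodWreath H) :
              (prodWreath H) ⧸ (N.subgroupOf (prodWreath H))))
            (by
              intro a b hab
              apply Quotient.sound'
              rw [QuotientGroup.leftRel_apply] at hab ⊢
              rw [Subgroup.mem_subgroupOf]
              show (familyTop (fun j' => if j' = j then a else 1))⁻¹ *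
                familyTop (fun j' => if j' = j then b else 1) ∈ N
              rw [familyTop_inv, familyTop_mul]
              have : (fun j' : Fin n => (if j' = j then a else 1)⁻¹ *
                  (if j' = j then b else 1)) = fun j' => if j' = j then a⁻¹ * b else 1 := by
                funext j'
                by_cases h : j' = j <;> simp [h]
              rw [this]
              exact (hΦmem _).1 hab)) := by
        intro q1 q2 h
        induction q1 using Quotient.inductionOn'
        induction q2 using Quotient.inductionOn'
        rename_i a b
        simp only [Quotient.liftOn'_mk''] at h
        apply Quotient.sound'
        rw [QuotientGroup.leftRel_apply]
        have h' := Quotient.exact' h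
        rw [QuotientGroup.leftRel_apply, Subgroup.mem_subgroupOf] at h'
        have h'' : (familyTop (fun j' => if j' = j then a else 1))⁻¹ *
            familyTop (fun j' => if j' = j then b else 1) ∈ N := h'
        rw [familyTop_inv, familyTop_mul] at h''
        have : (fun j' : Fin n => (if j' = j then a else 1)⁻¹ *
            (if j' = j then b else 1)) = fun j' => if j' = j then a⁻¹ * b else 1 := by
          funext j'
          by_cases h : j' = j <;> simp [h]
        rw [this] at h''
        exact (hΦmem _).2 h''
      have : Finite (Equiv.Perm ℕ ⧸ Φ) := Finite.of_injective _ hinj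
      rw [Subgroup.index]
      rw [Nat.card_ne_zero]
      exact ⟨⟨QuotientGroup.mk 1⟩, this⟩
    intro σ
    exact (hΦmem σ).1 (perm_nat_top Φ hΦn hΦidx σ)
  -- assemble over all coordinates
  have hS : ∀ S : Finset (Fin n), ∀ σs : ∀ j : Fin n, Equiv.Perm ℕ,
      familyTop (α := α) (fun j => if j ∈ S then σs j else 1) ∈ N := by
    intro S
    induction S using Finset.induction with
    | empty =>
      intro σs
      have : (fun j : Fin n => if j ∈ (∅ : Finset (Fin n)) then σs j else 1)
          = fun _ => 1 := by funext j; simp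
      rw [this, familyTop_one]
      exact N.one_mem
    | @insert j S hjS ih =>
      intro σs
      have : (fun j' : Fin n => if j' ∈ insert j S then σs j' else 1)
          = fun j' => (if j' = j then σs j else 1) * (if j' ∈ S then σs j' else 1) := by
        funext j'
        by_cases h1 : j' = j
        · subst h1
          simp [hjS]
        · by_cases h2 : j' ∈ S <;> simp [h1, h2]
      rw [this, ← familyTop_mul]
      exact N.mul_mem (hsingle j (σs j)) (ih σs)
  have : (fun j : Fin n => if j ∈ (Finset.univ : Finset (Fin n)) then σs j else 1) = σs := by
    funext j; simp
  have h := hS Finset.univ σs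
  rw [this] at h
  exact h

/-- chain argument for base elements supported on a slice-0 of a pairing -/
lemma base_slice_mem_N
    (hnormal : ∀ k ∈ prodWreath H, ∀ x ∈ N, k * x * k⁻¹ ∈ N)
    (htop : ∀ σs : ∀ j : Fin n, Equiv.Perm ℕ, familyTop σs ∈ N)
    (Θ : (ℤ × ℕ) ≃ ℕ) (u : ∀ j : Fin n, ℕ → Equiv.Perm (α j))
    (humem : ∀ j i, u j i ∈ H j)
    (hu0 : ∀ (j : Fin n) (k : ℤ) (i : ℕ), k ≠ 0 → u j (Θ (k, i)) = 1) :
    familyBase u ∈ N := by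
  classical
  set σs : Equiv.Perm ℕ := Θ.permCongr sh with hσs
  set d : ∀ j : Fin n, ℕ → Equiv.Perm (α j) :=
    fun j m => if 0 ≤ (Θ.symm m).1 then u j (Θ (0, (Θ.symm m).2)) else 1 with hd
  set D : Equiv.Perm (Σ j, α j × ℕ) := familyBase d with hD
  set s : Equiv.Perm (Σ j, α j × ℕ) := familyTop (fun _ => σs) with hs
  have hσs_inv : ∀ (k : ℤ) (i : ℕ), σs⁻¹ (Θ (k, i)) = Θ (k - 1, i) := by
    intro k i
    rw [hσs, ← permCongr_inv, Equiv.permCongr_apply, Equiv.symm_apply_apply]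
    have : sh⁻¹ (k, i) = (k - 1, i) := by
      rw [Equiv.Perm.inv_def, Equiv.symm_apply_eq]
      show (k, i) = ((k - 1) + 1, i)
      norm_num
    rw [this]
  have hident : familyBase u = D * (s * D⁻¹ * s⁻¹) := by
    have hconj : s * D⁻¹ * s⁻¹ = familyBase (fun j i => (d j (σs⁻¹ i))⁻¹) := by
      rw [hD, familyBase_inv, hs, familyTop_conj_base]
    rw [hconj, hD, familyBase_mul]
    congr 1
    funext j m
    obtain ⟨⟨k, i⟩, hki⟩ : ∃ z : ℤ × ℕ, Θ z = m := ⟨Θ.symm m, Θ.apply_symm_apply m⟩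
    have hsymm : Θ.symm m = (k, i) := by rw [← hki, Θ.symm_apply_apply]
    have hdm : d j m = if 0 ≤ k then u j (Θ (0, i)) else 1 := by
      rw [hd]
      simp only [hsymm]
    have hdm' : d j (σs⁻¹ m) = if 0 ≤ k - 1 then u j (Θ (0, i)) else 1 := by
      rw [← hki, hσs_inv, hd]
      simp only [Θ.symm_apply_apply]
    rw [hdm, hdm']
    rcases lt_trichotomy k 0 with hk | hk | hk
    · rw [if_neg (by omega), if_neg (by omega), ← hki,
        hu0 j k i (by omega)]
      simp
    · rw [if_pos (by omega), if_neg (by omega), ← hki, hk]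
      simp
    · rw [if_pos (by omega), if_pos (by omega), ← hki,
        hu0 j k i (by omega)]
      simp
  have hDmem : D ∈ prodWreath H := by
    apply memBase
    intro j i
    rw [hd]
    dsimp only
    split_ifs
    · exact humem _ _
    · exact (H j).one_mem
  have hsN : s ∈ N := htop _
  have h1 : D * s * D⁻¹ ∈ N := hnormal D hDmem s hsN
  have h2 : familyBase u = (D * s * D⁻¹) * s⁻¹ := by
    rw [hident]; group
  rw [h2]
  exact N.mul_mem h1 (N.inv_mem hsN)

lemma base_mem_N
    (hnormal : ∀ k ∈ prodWreath H, ∀ x ∈ N, k * x * k⁻¹ ∈ N)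
    (htop : ∀ σs : ∀ j : Fin n, Equiv.Perm ℕ, familyTop σs ∈ N)
    (hs : ∀ j : Fin n, ℕ → Equiv.Perm (α j)) (hval : ∀ j i, hs j i ∈ H j) :
    familyBase hs ∈ N := by
  classical
  set ue : ∀ j : Fin n, ℕ → Equiv.Perm (α j) :=
    fun j i => if Even i then hs j i else 1 with hue
  set uo : ∀ j : Fin n, ℕ → Equiv.Perm (α j) :=
    fun j i => if Even i then 1 else hs j i with huo
  have hsplit : familyBase hs = familyBase ue * familyBase uo := by
    rw [familyBase_mul]
    congr 1
    funext j i
    rw [hue, huo]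
    dsimp only
    by_cases h : Even i <;> simp [h]
  rw [hsplit]
  refine N.mul_mem ?_ ?_
  · apply base_slice_mem_N H hnormal htop psi
    · intro j i
      rw [hue]
      dsimp only
      split_ifs
      · exact hval _ _
      · exact (H j).one_mem
    · intro j k i hk
      rw [hue]
      dsimp only
      rw [if_neg (psi_odd i hk)]
  · apply base_slice_mem_N H hnormal htop psi'
    · intro j i
      rw [huo]
      dsimp only
      split_ifs
      · exact (H j).one_mem
      · exact hval _ _
    · intro j k i hk
      rw [huo]
      dsimp only
      rw [if_pos (psi'_even i hk)]

end MainProof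

end
end WreathNFQ

/-- The direct product `K = ∏_j (H_j ≀ Sym(ℕ))` of wreath products of finite
groups with `Sym(ℕ)`, each factor acting on its own summand `α j × ℕ`, admits
no proper normal subgroup of finite index. -/
theorem prodWreath_no_proper_finite_index_normal_subgroup
    (n : ℕ) (α : Fin n → Type*) [∀ j, Finite (α j)] [∀ j, Nonempty (α j)]
    (H : ∀ j, Subgroup (Equiv.Perm (α j)))
    (N : Subgroup (Equiv.Perm (Σ j, α j × ℕ)))
    (hle : N ≤ prodWreath H)
    (hnormal : ∀ k ∈ prodWreath H, ∀ x ∈ N, k * x * k⁻¹ ∈ N)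
    (hindex : (N.subgroupOf (prodWreath H)).index ≠ 0) :
    N = prodWreath H := by
  classical
  apply le_antisymm hle
  intro g hg
  have hg' : ∀ j, ∃ σ : Equiv.Perm ℕ, ∃ h : ℕ → Equiv.Perm (α j),
      (∀ i, h i ∈ H j) ∧ ∀ (a : α j) (i : ℕ), g ⟨j, (a, i)⟩ = ⟨j, (h i a, σ i)⟩ := hg
  choose σf hf hmem heq using hg'
  have hfinq : Finite ((prodWreath H) ⧸ (N.subgroupOf (prodWreath H))) := by
    have h := hindex
    rw [Subgroup.index, Nat.card_ne_zero] at h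
    exact h.2
  have htop : ∀ σs : ∀ j : Fin n, Equiv.Perm ℕ, WreathNFQ.familyTop σs ∈ N :=
    WreathNFQ.top_mem_N H hnormal hfinq
  set t : Equiv.Perm (Σ j, α j × ℕ) := WreathNFQ.familyTop σf with ht
  have htN : t ∈ N := htop σf
  have hbase : g * t⁻¹ = WreathNFQ.familyBase (fun j i => hf j ((σf j)⁻¹ i)) := by
    apply Equiv.ext
    rintro ⟨j, a, i⟩
    rw [ht, WreathNFQ.familyBase_apply]
    show g ((WreathNFQ.familyTop σf)⁻¹ ⟨j, (a, i)⟩) = _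
    rw [WreathNFQ.familyTop_inv, WreathNFQ.familyTop_apply, heq]
    simp
  have hbN : g * t⁻¹ ∈ N := by
    rw [hbase]
    exact WreathNFQ.base_mem_N H hnormal htop _ (fun j i => hmem j _)
  have : g = (g * t⁻¹) * t := by group
  rw [this]
  exact N.mul_mem hbN htN
end

section
/- Let 𝕜 be a field and A a commutative 𝕜-algebra equipped with an ℕ-grading by 𝕜-submodules 𝒜 (a graded algebra) that is connected, i.e., the degree-zero component 𝒜 0 is the 𝕜-span of 1. Let M be an A-module equipped with an ℕ-grading by 𝕜-submodules ℳ compatible with the grading of A (M is the internal direct sum of the ℳ d, and 𝒜 i • ℳ j ⊆ ℳ (i + j)), and assume M admits a basis as an A-module consisting of homogeneous elements. Then for every basis (b_j)_{j ∈ J} of M as a 𝕜-vector space consisting of homogeneous elements, there exists a subset J' ⊆ J such that (b_j)_{j ∈ J'} is a basis of M as an A-module. -/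
set_option linter.unusedSectionVars false

open DirectSum

section Aux
variable {𝕜 : Type*} [Field 𝕜] {A : Type*} [CommRing A] [Algebra 𝕜 A]
  (𝒜 : ℕ → Submodule 𝕜 A) [GradedAlgebra 𝒜]
  {M : Type*} [AddCommGroup M] [Module A M] [Module 𝕜 M] [IsScalarTower 𝕜 A M]
  (ℳ : ℕ → Submodule 𝕜 M) [DirectSum.Decomposition ℳ]

/-- components of a product land in a submodule if all the homogeneous pieces do -/
theorem aux_key
    (hcompat : ∀ (i j : ℕ) (a : A) (m : M), a ∈ 𝒜 i → m ∈ ℳ j → a • m ∈ ℳ (i + j))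
    (P : Submodule A M) (a : A) (m : M) (d : ℕ)
    (h : ∀ i j, i + j = d →
      ((DirectSum.decompose 𝒜 a i : A) • (DirectSum.decompose ℳ m j : M)) ∈ P) :
    (DirectSum.decompose ℳ (a • m) d : M) ∈ P := by
  classical
  have hs : a • m = ∑ i ∈ (DirectSum.decompose 𝒜 a).support,
      ∑ j ∈ (DirectSum.decompose ℳ m).support,
        (DirectSum.decompose 𝒜 a i : A) • (DirectSum.decompose ℳ m j : M) := by
    conv_lhs => rw [← DirectSum.sum_support_decompose 𝒜 a,
      ← DirectSum.sum_support_decompose ℳ m]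
    rw [Finset.sum_smul]
    exact Finset.sum_congr rfl fun i _ => Finset.smul_sum
  let π : M →+ M :=
    { toFun := fun x => (DirectSum.decompose ℳ x d : M)
      map_zero' := by simp
      map_add' := fun x y => by simp [DirectSum.decompose_add] }
  show π (a • m) ∈ P
  rw [hs, map_sum]
  refine Submodule.sum_mem _ fun i _ => ?_
  rw [map_sum]
  refine Submodule.sum_mem _ fun j _ => ?_
  show (DirectSum.decompose ℳ _ d : M) ∈ P
  have hmem : (DirectSum.decompose 𝒜 a i : A) • (DirectSum.decompose ℳ m j : M) ∈ ℳ (i + j) :=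
    hcompat i j _ _ (DirectSum.decompose 𝒜 a i).2 (DirectSum.decompose ℳ m j).2
  by_cases hij : i + j = d
  · subst hij
    rw [DirectSum.decompose_of_mem_same ℳ hmem]
    exact h i j rfl
  · rw [DirectSum.decompose_of_mem_ne ℳ hmem hij]
    exact P.zero_mem


theorem aux_graded
    (hcompat : ∀ (i j : ℕ) (a : A) (m : M), a ∈ 𝒜 i → m ∈ ℳ j → a • m ∈ ℳ (i + j))
    (S : Set M) (hS : ∀ x ∈ S, ∃ d, x ∈ ℳ d) {m : M} (hm : m ∈ Submodule.span A S)
    (d : ℕ) : (DirectSum.decompose ℳ m d : M) ∈ Submodule.span A S := by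
  induction hm using Submodule.span_induction generalizing d with
  | mem x hx =>
    obtain ⟨e, he⟩ := hS x hx
    by_cases hde : e = d
    · subst hde; rw [DirectSum.decompose_of_mem_same ℳ he]; exact Submodule.subset_span hx
    · rw [DirectSum.decompose_of_mem_ne ℳ he hde]; exact Submodule.zero_mem _
  | zero => simp
  | add x y hx hy ihx ihy =>
    rw [DirectSum.decompose_add]
    exact Submodule.add_mem _ (by simpa using ihx d) (by simpa using ihy d)
  | smul a x hx ih =>
    exact aux_key 𝒜 ℳ hcompat _ a x d fun i j _ => Submodule.smul_mem _ _ (ih j)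

theorem aux_nakayama
    (hcompat : ∀ (i j : ℕ) (a : A) (m : M), a ∈ 𝒜 i → m ∈ ℳ j → a • m ∈ ℳ (i + j))
    (S : Set M) (hS : ∀ x ∈ S, ∃ d, x ∈ ℳ d)
    (hsup : Submodule.span A S ⊔
      ((HomogeneousIdeal.irrelevant 𝒜).toIdeal • (⊤ : Submodule A M)) = ⊤) :
    Submodule.span A S = ⊤ := by
  classical
  set P := Submodule.span A S with hP
  set I := (HomogeneousIdeal.irrelevant 𝒜).toIdeal with hI
  have hI0 : ∀ a ∈ I, (DirectSum.decompose 𝒜 a 0 : A) = 0 := by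
    intro a ha
    have := (HomogeneousIdeal.mem_irrelevant_iff 𝒜 a).1 ha
    rwa [GradedRing.proj_apply] at this
  have hMd : ∀ d, ∀ m ∈ ℳ d, m ∈ P := by
    intro d
    induction d using Nat.strong_induction_on with
    | _ d ih =>
      intro m hm
      have hmem : m ∈ P ⊔ I • ⊤ := by rw [hsup]; exact Submodule.mem_top
      obtain ⟨p, hp, x, hx, hpx⟩ := Submodule.mem_sup.1 hmem
      have hdm : (DirectSum.decompose ℳ m d : M) = m := DirectSum.decompose_of_mem_same ℳ hm
      have hxd : (DirectSum.decompose ℳ x d : M) ∈ P := by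
        refine Submodule.smul_induction_on hx (fun r hr n _ => ?_) (fun y z hy hz => ?_)
        · refine aux_key 𝒜 ℳ hcompat _ r n d fun i j hij => ?_
          rcases Nat.eq_zero_or_pos i with hi | hi
          · subst hi; rw [hI0 r hr, zero_smul]; exact P.zero_mem
          · have hjd : j < d := by omega
            exact P.smul_mem _ (ih j hjd _ (DirectSum.decompose ℳ n j).2)
        · rw [DirectSum.decompose_add]
          exact Submodule.add_mem _ (by simpa using hy) (by simpa using hz)
      have hpd : (DirectSum.decompose ℳ p d : M) ∈ P :=
        aux_graded 𝒜 ℳ hcompat S hS hp d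
      have : (DirectSum.decompose ℳ m d : M) ∈ P := by
        rw [← hpx, DirectSum.decompose_add]
        exact Submodule.add_mem _ (by simpa using hpd) (by simpa using hxd)
      rwa [hdm] at this
  rw [eq_top_iff]
  intro m _
  rw [← DirectSum.sum_support_decompose ℳ m]
  exact Submodule.sum_mem _ fun d _ => hMd d _ (DirectSum.decompose ℳ m d).2


theorem aux_pow (n : ℕ) :
    ∀ a ∈ (HomogeneousIdeal.irrelevant 𝒜).toIdeal ^ n, ∀ i < n,
      (DirectSum.decompose 𝒜 a i : A) = 0 := by
  induction n with
  | zero => intro a _ i hi; omega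
  | succ n ih =>
    intro a ha i hi
    rw [pow_succ] at ha
    have hcompatA : ∀ (i j : ℕ) (a m : A), a ∈ 𝒜 i → m ∈ 𝒜 j → a • m ∈ 𝒜 (i + j) :=
      fun i j a m ha hm => by rw [smul_eq_mul]; exact SetLike.mul_mem_graded ha hm
    refine Submodule.mul_induction_on ha (fun x hx r hr => ?_) (fun x y hx hy => ?_)
    · rw [← Submodule.mem_bot (R := A), ← smul_eq_mul]
      refine aux_key 𝒜 𝒜 hcompatA ⊥ x r i fun i' j hij => ?_
      rcases Nat.lt_or_ge i' n with hi' | hi'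
      · rw [ih x hx i' hi', zero_smul]; exact Submodule.zero_mem _
      · have hj : j = 0 := by omega
        subst hj
        have hr0 : (DirectSum.decompose 𝒜 r 0 : A) = 0 := by
          have := (HomogeneousIdeal.mem_irrelevant_iff 𝒜 r).1 hr
          rwa [GradedRing.proj_apply] at this
        rw [hr0, smul_zero]; exact Submodule.zero_mem _
    · rw [DirectSum.decompose_add, DirectSum.add_apply, Submodule.coe_add, hx, hy, add_zero]

theorem aux_krull {a : A}
    (ha : ∀ n, a ∈ (HomogeneousIdeal.irrelevant 𝒜).toIdeal ^ n) : a = 0 := by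
  classical
  rw [← DirectSum.sum_support_decompose 𝒜 a]
  refine Finset.sum_eq_zero fun i _ => ?_
  exact aux_pow 𝒜 (i + 1) a (ha (i + 1)) i (Nat.lt_succ_self i)

end Aux

/-- Let `A` be a connected `ℕ`-graded commutative algebra over a field `𝕜`,
and `M` a graded `A`-module admitting an `A`-basis of homogeneous elements.
Then from any homogeneous `𝕜`-vector-space basis of `M` one can extract a
subfamily which is an `A`-basis of `M`. -/
theorem extract_module_basis_from_homogeneous_vector_basis
    (𝕜 : Type*) [Field 𝕜] (A : Type*) [CommRing A] [Algebra 𝕜 A]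
    (𝒜 : ℕ → Submodule 𝕜 A) [GradedAlgebra 𝒜]
    (hconn : 𝒜 0 = Submodule.span 𝕜 {1})
    (M : Type*) [AddCommGroup M] [Module A M] [Module 𝕜 M]
    [IsScalarTower 𝕜 A M]
    (ℳ : ℕ → Submodule 𝕜 M) [DirectSum.Decomposition ℳ]
    (hcompat : ∀ (i j : ℕ) (a : A) (m : M), a ∈ 𝒜 i → m ∈ ℳ j → a • m ∈ ℳ (i + j))
    (hfree : ∃ s : Set M, (∀ x ∈ s, ∃ d, x ∈ ℳ d) ∧
      LinearIndependent A ((↑) : s → M) ∧ Submodule.span A s = ⊤)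
    (J : Type*) (b : Module.Basis J 𝕜 M) (hb : ∀ j, ∃ d, b j ∈ ℳ d) :
    ∃ J' : Set J,
      LinearIndependent A (fun j : J' => b j) ∧
      Submodule.span A (Set.range (fun j : J' => b j)) = ⊤ := by
  classical
  obtain ⟨s, hs_homog, hs_ind, hs_span⟩ := hfree
  set I : Ideal A := (HomogeneousIdeal.irrelevant 𝒜).toIdeal with hIdef
  have hImem : ∀ a : A, a ∈ I ↔ (DirectSum.decompose 𝒜 a 0 : A) = 0 := by
    intro a
    rw [hIdef, HomogeneousIdeal.mem_iff, HomogeneousIdeal.mem_irrelevant_iff,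
      GradedRing.proj_apply]
  set N : Submodule A M := I • ⊤ with hNdef
  set N' : Submodule 𝕜 M := N.restrictScalars 𝕜 with hN'def
  set q : M →ₗ[𝕜] M ⧸ N' := N'.mkQ with hqdef
  set v : J → M ⧸ N' := fun j => q (b j) with hvdef
  have hvspan : Submodule.span 𝕜 (Set.range v) = ⊤ := by
    have hrv : Set.range v = q '' Set.range ⇑b := Set.range_comp q ⇑b
    rw [hrv, Submodule.span_image, b.span_eq, Submodule.map_top, Submodule.range_mkQ]
  obtain ⟨t, hts, htspan, htind⟩ := exists_linearIndependent 𝕜 (Set.range v)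
  have hchoice : ∀ x : t, ∃ j, v j = (x : M ⧸ N') := fun x => hts x.2
  choose g hg using hchoice
  have hginj : Function.Injective g := fun x y hxy =>
    Subtype.ext (by rw [← hg x, ← hg y, hxy])
  have hrange : Set.range (fun j : (Set.range g : Set J) => b j) = b '' Set.range g :=
    (Set.image_eq_range ⇑b (Set.range g)).symm
  have hPtop : Submodule.span A (b '' Set.range g) = ⊤ := by
    refine aux_nakayama 𝒜 ℳ hcompat _ (by rintro x ⟨j, _, rfl⟩; exact hb j) ?_
    rw [eq_top_iff]
    intro m _
    have hvJ' : v '' Set.range g = (t : Set (M ⧸ N')) := by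
      ext x
      constructor
      · rintro ⟨j, ⟨y, rfl⟩, rfl⟩
        rw [hg y]; exact y.2
      · intro hx
        exact ⟨g ⟨x, hx⟩, ⟨⟨x, hx⟩, rfl⟩, hg ⟨x, hx⟩⟩
    have hqm : q m ∈ Submodule.span 𝕜 (q '' (b '' Set.range g)) := by
      have himg : q '' (b '' Set.range g) = v '' Set.range g := by
        rw [Set.image_image]
      rw [himg, hvJ', htspan, hvspan]
      exact Submodule.mem_top
    rw [Submodule.span_image] at hqm
    obtain ⟨p, hp, hqp⟩ := hqm
    have hmp : m - p ∈ N := by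
      have h0 : q (m - p) = 0 := by rw [map_sub, hqp, sub_self]
      rw [hqdef, Submodule.mkQ_apply, Submodule.Quotient.mk_eq_zero] at h0
      exact h0
    have h1 : p ∈ Submodule.span A (b '' Set.range g) := by
      have hle : Submodule.span 𝕜 (b '' Set.range g) ≤
          (Submodule.span A (b '' Set.range g)).restrictScalars 𝕜 :=
        Submodule.span_le.2 fun x hx => Submodule.subset_span hx
      exact hle hp
    have hm : m = p + (m - p) := by abel
    rw [hm]
    exact Submodule.add_mem _ (Submodule.mem_sup_left h1) (Submodule.mem_sup_right hmp)
  refine ⟨Set.range g, ?_, by rw [hrange]; exact hPtop⟩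
  -- the 𝕜-independence of v on the chosen index set
  have hvind : LinearIndependent 𝕜 (fun j : (Set.range g : Set J) => v j) := by
    let e : t ≃ (Set.range g : Set J) := Equiv.ofInjective g hginj
    have hcomp : (fun j : (Set.range g : Set J) => v j) =
        ((↑) : t → M ⧸ N') ∘ e.symm := by
      funext j
      obtain ⟨x, hx⟩ : ∃ x : t, e x = j := ⟨e.symm j, e.apply_symm_apply j⟩
      subst hx
      simp only [Function.comp_apply, Equiv.symm_apply_apply]
      exact hg x
    rw [hcomp]
    exact htind.comp e.symm e.symm.injective
  set φ : ((Set.range g : Set J) →₀ A) →ₗ[A] M :=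
    Finsupp.linearCombination A (fun j : (Set.range g : Set J) => b j) with hφdef
  -- step 1 : coefficients of kernel elements lie in the irrelevant ideal
  have hval : ∀ (a : A) (j : J), ∃ r : 𝕜,
      (DirectSum.decompose 𝒜 a 0 : A) = algebraMap 𝕜 A r ∧ q (a • b j) = r • v j := by
    intro a j
    obtain ⟨x, hx0, hxeq⟩ : ∃ x : A, x ∈ 𝒜 0 ∧ (DirectSum.decompose 𝒜 a 0 : A) = x :=
      ⟨_, (DirectSum.decompose 𝒜 a 0).2, rfl⟩
    rw [hconn] at hx0
    obtain ⟨r, hr⟩ := Submodule.mem_span_singleton.1 hx0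
    refine ⟨r, by rw [hxeq, ← hr, Algebra.algebraMap_eq_smul_one], ?_⟩
    have hdiff : a - (DirectSum.decompose 𝒜 a 0 : A) ∈ I := by
      rw [hImem]
      have hsame : (DirectSum.decompose 𝒜 ((DirectSum.decompose 𝒜 a 0 : A)) 0 : A) =
          (DirectSum.decompose 𝒜 a 0 : A) :=
        DirectSum.decompose_of_mem_same 𝒜 (DirectSum.decompose 𝒜 a 0).2
      rw [DirectSum.decompose_sub, DirectSum.sub_apply, Submodule.coe_sub, hsame, sub_self]
    have hN1 : (a - (DirectSum.decompose 𝒜 a 0 : A)) • b j ∈ N :=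
      Submodule.smul_mem_smul hdiff Submodule.mem_top
    have hq0 : q ((a - (DirectSum.decompose 𝒜 a 0 : A)) • b j) = 0 := by
      rw [hqdef, Submodule.mkQ_apply, Submodule.Quotient.mk_eq_zero]
      exact hN1
    have hsplit : a • b j = (a - (DirectSum.decompose 𝒜 a 0 : A)) • b j +
        (DirectSum.decompose 𝒜 a 0 : A) • b j := by
      rw [← add_smul, sub_add_cancel]
    rw [hsplit, map_add, hq0, zero_add, hxeq, ← hr]
    have : ((r • (1 : A)) • b j) = r • ((1:A) • b j) := smul_assoc r (1:A) (b j)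
    rw [this, one_smul, map_smul]
  have hkerI : ∀ k ∈ LinearMap.ker φ, ∀ j : (Set.range g : Set J), k j ∈ I := by
    intro k hk j₀
    choose r hr1 hr2 using fun j : (Set.range g : Set J) => hval (k j) j
    have h0 : ∑ j ∈ k.support, r j • v j = 0 := by
      have hφk : φ k = ∑ j ∈ k.support, (k j) • b (j : J) := by
        rw [hφdef, Finsupp.linearCombination_apply, Finsupp.sum]
      have : q (φ k) = ∑ j ∈ k.support, r j • v j := by
        rw [hφk, map_sum]
        exact Finset.sum_congr rfl fun j _ => hr2 j
      rw [← this, LinearMap.mem_ker.1 hk, map_zero]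
    have hr0 : ∀ j ∈ k.support, r j = 0 := linearIndependent_iff'.1 hvind _ _ h0
    by_cases hj : j₀ ∈ k.support
    · rw [hImem, hr1 j₀, hr0 j₀ hj, map_zero]
    · rw [Finsupp.notMem_support_iff.1 hj]
      exact Ideal.zero_mem I
  have hkerIT : LinearMap.ker φ ≤ I • (⊤ : Submodule A ((Set.range g : Set J) →₀ A)) := by
    intro k hk
    rw [← Finsupp.sum_single k, Finsupp.sum]
    refine Submodule.sum_mem _ fun j _ => ?_
    have hsing : Finsupp.single j (k j) = (k j) • Finsupp.single j (1 : A) := by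
      rw [Finsupp.smul_single, smul_eq_mul, mul_one]
    rw [hsing]
    exact Submodule.smul_mem_smul (hkerI k hk j) Submodule.mem_top
  -- step 2 : splitting coming from freeness of M
  let c : Module.Basis s A M := Module.Basis.mk hs_ind (by rw [Subtype.range_coe, hs_span])
  have hφsurj : ∀ m : M, ∃ x, φ x = m := by
    intro m
    have hmem : m ∈ LinearMap.range φ := by
      rw [hφdef, Finsupp.range_linearCombination, hrange, hPtop]
      exact Submodule.mem_top
    exact hmem
  choose sec hsec using hφsurj
  let σ : M →ₗ[A] ((Set.range g : Set J) →₀ A) := Module.Basis.constr c ℕ fun i => sec (c i)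
  have hφσ : ∀ m, φ (σ m) = m := by
    intro m
    have hcomp : φ.comp σ = LinearMap.id := c.ext fun i => by
      simp only [LinearMap.comp_apply, LinearMap.id_apply, σ, Module.Basis.constr_basis]
      exact hsec (c i)
    calc φ (σ m) = (φ.comp σ) m := rfl
      _ = m := by rw [hcomp]; rfl
  have hkerIK : LinearMap.ker φ ≤ I • (LinearMap.ker φ) := by
    intro k hk
    set ρ : ((Set.range g : Set J) →₀ A) →ₗ[A] ((Set.range g : Set J) →₀ A) :=
      LinearMap.id - σ.comp φ with hρdef
    have hρk : ρ k = k := by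
      rw [hρdef]
      simp only [LinearMap.sub_apply, LinearMap.id_apply, LinearMap.comp_apply,
        LinearMap.mem_ker.1 hk, map_zero, sub_zero]
    have hρ_ker : Submodule.map ρ ⊤ ≤ LinearMap.ker φ := by
      rintro _ ⟨x, -, rfl⟩
      rw [LinearMap.mem_ker, hρdef]
      simp only [LinearMap.sub_apply, LinearMap.id_apply, LinearMap.comp_apply, map_sub, hφσ]
      exact sub_self _
    have hmem : ρ k ∈ Submodule.map ρ (I • ⊤) := Submodule.mem_map_of_mem (hkerIT hk)
    rw [Submodule.map_smul''] at hmem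
    rw [← hρk]
    exact smul_mono_right _ hρ_ker hmem
  -- step 3 : intersect the powers
  have hpow : ∀ n, LinearMap.ker φ ≤
      I ^ n • (⊤ : Submodule A ((Set.range g : Set J) →₀ A)) := by
    intro n
    induction n with
    | zero => rw [pow_zero, Ideal.one_eq_top, Submodule.top_smul]; exact le_top
    | succ n ih =>
      calc LinearMap.ker φ ≤ I • LinearMap.ker φ := hkerIK
        _ ≤ I • (I ^ n • ⊤) := smul_mono_right _ ih
        _ = (I • I ^ n) • ⊤ := (Submodule.smul_assoc _ _ _).symm
        _ = I ^ (n + 1) • ⊤ := by rw [smul_eq_mul, ← pow_succ']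
  have hker0 : LinearMap.ker φ = ⊥ := by
    rw [eq_bot_iff]
    intro k hk
    rw [Submodule.mem_bot]
    ext j
    have hj : ∀ n, k j ∈ I ^ n := by
      intro n
      have h1 := Submodule.mem_map_of_mem (f := (Finsupp.lapply j :
        ((Set.range g : Set J) →₀ A) →ₗ[A] A)) (hpow n hk)
      rw [Submodule.map_smul''] at h1
      have h2 : (k j) ∈ I ^ n • (⊤ : Submodule A A) :=
        (show I ^ n • _ ≤ I ^ n • (⊤ : Submodule A A) from smul_mono_right _ le_top) (by simpa [Finsupp.lapply_apply] using h1)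
      refine Submodule.smul_induction_on h2 (fun r hr x _ => ?_)
        (fun x y hx hy => Ideal.add_mem _ hx hy)
      rw [smul_eq_mul]
      exact Ideal.mul_mem_right x _ hr
    simpa using aux_krull 𝒜 hj
  exact linearIndependent_iff_ker.2 hker0
end
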